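/- arXiv:1808.10535 — 6 statements merged into one kernel-verified Lean document; each statement's English description precedes it below -/
import Mathlib

section
/- Let m ∈ ℕ and let L_k denote the k-fold iterated natural logarithm (L₁(t) = ln t, L_{k+1}(t) = ln(L_k(t))), and 𝓛_m(t) = (L₁(t),…,L_m(t)). Let Q₀(z) = Σ_α c_α z^α be a real polynomial in m variables (sum over finitely many multi-indices α ∈ ℕ₀^m), let α* = (α*₁,…,α*_m) be the largest multi-index with c_{α*} ≠ 0 in the lexicographic order, and assume |α*| ≥ 1 and c_{α*} > 0. Let Q₁ be a real polynomial in one variable of degree d ≥ 1 with positive leading coefficient, and let β > 0. Define ω(t) = Q₀(𝓛_m(Q₁(t^β))), which is positive on [T*,∞) for some T* > 0 and tends to ∞ as t → ∞. Then for every λ > 0, lim_{t→∞} ω(t)^{−λ} · Π_{k=1}^m L_k(t)^{λ α*_k} = ( c_{α*} (βd)^{α*₁} )^{−λ}. -/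
open Filter

noncomputable def iterLog : ℕ → ℝ → ℝ
  | 0, t => t
  | k + 1, t => Real.log (iterLog k t)

lemma iterLog_tendsto (k : ℕ) : Tendsto (iterLog k) atTop atTop := by
  induction k with
  | zero => exact tendsto_id
  | succ k ih => exact Real.tendsto_log_atTop.comp ih

lemma iterLog_antitone (x : ℝ) {a b n : ℕ} (hab : a ≤ b) (hbn : b ≤ n)
    (h : ∀ j, j ≤ n → 1 ≤ iterLog j x) : iterLog b x ≤ iterLog a x := by
  induction b with
  | zero => simp_all
  | succ b ih =>
    rcases Nat.eq_or_lt_of_le hab with rfl | hab'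
    · exact le_refl _
    · have hab2 : a ≤ b := Nat.lt_succ_iff.mp hab'
      calc iterLog (b + 1) x = Real.log (iterLog b x) := rfl
        _ ≤ iterLog b x :=
            Real.log_le_self (le_trans zero_le_one (h b (by omega)))
        _ ≤ iterLog a x := ih hab2 (by omega)

lemma log_ratio_tendsto {u v : ℝ → ℝ} {c : ℝ} (hc : 0 < c)
    (huv : Tendsto (fun t => u t / v t) atTop (nhds c))
    (hv : Tendsto v atTop atTop)
    (hlv : Tendsto (fun t => Real.log (v t)) atTop atTop) :
    Tendsto (fun t => Real.log (u t) / Real.log (v t)) atTop (nhds 1) := by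
  have hvpos : ∀ᶠ t in atTop, 0 < v t := hv.eventually_gt_atTop 0
  have hrpos : ∀ᶠ t in atTop, 0 < u t / v t := huv.eventually (eventually_gt_nhds hc)
  have hlvpos : ∀ᶠ t in atTop, 0 < Real.log (v t) := hlv.eventually_gt_atTop 0
  have hlog : Tendsto (fun t => Real.log (u t / v t)) atTop (nhds (Real.log c)) :=
    (Real.continuousAt_log hc.ne').tendsto.comp huv
  have h0 : Tendsto (fun t => Real.log (u t / v t) / Real.log (v t)) atTop (nhds 0) :=
    hlog.div_atTop hlv
  have := (tendsto_const_nhds (x := (1:ℝ)) (f := atTop)).add h0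
  rw [add_zero] at this
  refine this.congr' ?_
  filter_upwards [hvpos, hrpos, hlvpos] with t hv0 hr0 hlv0
  have hu0 : 0 < u t := by
    have := mul_pos hr0 hv0
    rwa [div_mul_cancel₀ _ hv0.ne'] at this
  have : Real.log (u t / v t) = Real.log (u t) - Real.log (v t) :=
    Real.log_div hu0.ne' hv0.ne'
  rw [this]
  field_simp
  ring

lemma logQ_ratio (Q₁ : Polynomial ℝ) (hd : 1 ≤ Q₁.natDegree) (hlc : 0 < Q₁.leadingCoeff) :
    Tendsto (fun x : ℝ => Real.log (Q₁.eval x) / Real.log x) atTop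
      (nhds (Q₁.natDegree : ℝ)) := by
  set lc := Q₁.leadingCoeff with hlcdef
  set d := Q₁.natDegree with hddef
  have hz : ∀ᶠ x : ℝ in atTop, lc * x ^ d ≠ 0 := by
    filter_upwards [eventually_gt_atTop 0] with x hx
    exact ne_of_gt (by positivity)
  have hρ : Tendsto (fun x => Q₁.eval x / (lc * x ^ d)) atTop (nhds 1) :=
    (Asymptotics.isEquivalent_iff_tendsto_one hz).mp Q₁.isEquivalent_atTop_lead
  have hρpos : ∀ᶠ x in atTop, 0 < Q₁.eval x / (lc * x ^ d) :=
    hρ.eventually (eventually_gt_nhds one_pos)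
  have hlog1 : Tendsto (fun x => Real.log (Q₁.eval x / (lc * x ^ d))) atTop (nhds 0) := by
    have := (Real.continuousAt_log one_ne_zero).tendsto.comp hρ
    simpa [Function.comp_def] using this
  have hlim : Tendsto (fun x => Real.log lc / Real.log x + (d : ℝ)
      + Real.log (Q₁.eval x / (lc * x ^ d)) / Real.log x) atTop (nhds (0 + (d : ℝ) + 0)) :=
    ((tendsto_const_nhds.div_atTop Real.tendsto_log_atTop).add tendsto_const_nhds).add
      (hlog1.div_atTop Real.tendsto_log_atTop)
  rw [zero_add, add_zero] at hlim
  refine hlim.congr' ?_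
  filter_upwards [eventually_gt_atTop 1, hρpos] with x hx hρx
  have hx0 : (0:ℝ) < x := lt_trans one_pos hx
  have hL : Real.log x ≠ 0 := (Real.log_pos hx).ne'
  have hD : lc * x ^ d ≠ 0 := ne_of_gt (by positivity)
  have heval : (lc * x ^ d) * (Q₁.eval x / (lc * x ^ d)) = Q₁.eval x :=
    mul_div_cancel₀ _ hD
  have hloge : Real.log (Q₁.eval x) = Real.log lc + (d : ℝ) * Real.log x
      + Real.log (Q₁.eval x / (lc * x ^ d)) := by
    calc Real.log (Q₁.eval x)
        = Real.log ((lc * x ^ d) * (Q₁.eval x / (lc * x ^ d))) := by rw [heval]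
      _ = Real.log (lc * x ^ d) + Real.log (Q₁.eval x / (lc * x ^ d)) :=
          Real.log_mul hD hρx.ne'
      _ = Real.log lc + (d : ℝ) * Real.log x + Real.log (Q₁.eval x / (lc * x ^ d)) := by
          rw [Real.log_mul hlc.ne' (by positivity), Real.log_pow]
  rw [hloge]
  field_simp

lemma prod_ratio_vanish (m : ℕ) (X : ℝ → ℝ) (hX : Tendsto X atTop atTop)
    (α αs : Fin m → ℕ) (i : Fin m)
    (h1 : ∀ j : Fin m, j < i → α j = αs j) (h2 : α i < αs i) :
    Tendsto (fun t => (∏ j : Fin m, iterLog ((j : ℕ) + 1) (X t) ^ α j) /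
      (∏ j : Fin m, iterLog ((j : ℕ) + 1) (X t) ^ αs j)) atTop (nhds 0) := by
  classical
  set N := ∑ j : Fin m, α j with hN
  have hαN : ∀ j : Fin m, α j ≤ N :=
    fun j => Finset.single_le_sum (fun _ _ => Nat.zero_le _) (Finset.mem_univ j)
  -- eventual facts
  have hall : ∀ᶠ t in atTop, ∀ j ∈ Finset.range (m + 2), 1 ≤ iterLog j (X t) := by
    rw [eventually_all_finset]
    intro j _
    exact (((iterLog_tendsto j).comp hX).eventually_ge_atTop 1)
  -- the upper bound function
  have hup : Tendsto (fun t => (iterLog ((i : ℕ) + 1) (X t))⁻¹ *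
      (Real.log (iterLog ((i : ℕ) + 1) (X t))) ^ (N * (m - 1))) atTop (nhds 0) := by
    have h0 : Tendsto (fun x : ℝ => x⁻¹ * Real.log x ^ (N * (m - 1))) atTop (nhds 0) := by
      have := Real.tendsto_pow_log_div_mul_add_atTop 1 0 (N * (m - 1)) one_ne_zero
      refine this.congr ?_
      intro x; rw [one_mul, add_zero, div_eq_inv_mul]
    exact h0.comp ((iterLog_tendsto ((i : ℕ) + 1)).comp hX)
  refine tendsto_of_tendsto_of_tendsto_of_le_of_le' tendsto_const_nhds hup ?_ ?_
  · -- nonnegativity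
    filter_upwards [hall] with t ht
    have hpos : ∀ j : Fin m, 0 < iterLog ((j : ℕ) + 1) (X t) := by
      intro j
      exact lt_of_lt_of_le one_pos (ht _ (Finset.mem_range.mpr (by omega)))
    exact div_nonneg (Finset.prod_nonneg fun j _ => pow_nonneg (hpos j).le _)
      (Finset.prod_nonneg fun j _ => pow_nonneg (hpos j).le _)
  · -- upper bound
    filter_upwards [hall] with t ht
    have hone : ∀ j : ℕ, j ≤ m + 1 → 1 ≤ iterLog j (X t) := by
      intro j hj; exact ht j (Finset.mem_range.mpr (by omega))
    set L : ℕ → ℝ := fun k => iterLog k (X t) with hLdef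
    have hLpos : ∀ j : ℕ, j ≤ m + 1 → 0 < L j := fun j hj =>
      lt_of_lt_of_le one_pos (hone j hj)
    have hLi1 : (1:ℝ) ≤ L ((i : ℕ) + 1) := hone _ (by omega)
    have hLi2 : (1:ℝ) ≤ L ((i : ℕ) + 2) := hone _ (by omega)
    -- bound each factor
    have key : ∀ j : Fin m,
        L ((j : ℕ) + 1) ^ α j / L ((j : ℕ) + 1) ^ αs j ≤
          (if j = i then (L ((i : ℕ) + 1))⁻¹ else (L ((i : ℕ) + 2)) ^ N) := by
      intro j
      have hLj1 : (1:ℝ) ≤ L ((j : ℕ) + 1) := hone _ (by omega)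
      have hLjpos : (0:ℝ) < L ((j : ℕ) + 1) := lt_of_lt_of_le one_pos hLj1
      by_cases hji : j = i
      · subst hji
        rw [if_pos rfl]
        have hstep : L ((j : ℕ) + 1) ^ α j * L ((j : ℕ) + 1) ≤ L ((j : ℕ) + 1) ^ αs j := by
          rw [← pow_succ]
          exact pow_le_pow_right₀ hLj1 (by omega)
        rw [inv_eq_one_div, div_le_div_iff₀ (pow_pos hLjpos _) hLjpos]
        linarith
      · rw [if_neg hji]
        rcases lt_or_gt_of_ne hji with hlt | hgt
        · -- j < i : equal exponents, ratio = 1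
          rw [h1 j hlt, div_self (pow_pos hLjpos _).ne']
          exact one_le_pow₀ hLi2
        · -- i < j
          have hle : L ((j : ℕ) + 1) ≤ L ((i : ℕ) + 2) :=
            iterLog_antitone (X t) (by omega : (i : ℕ) + 2 ≤ (j : ℕ) + 1) (by omega) hone
          calc L ((j : ℕ) + 1) ^ α j / L ((j : ℕ) + 1) ^ αs j
              ≤ L ((j : ℕ) + 1) ^ α j :=
                div_le_self (pow_nonneg hLjpos.le _) (one_le_pow₀ hLj1)
            _ ≤ L ((i : ℕ) + 2) ^ α j :=
                pow_le_pow_left₀ hLjpos.le hle _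
            _ ≤ L ((i : ℕ) + 2) ^ N :=
                pow_le_pow_right₀ hLi2 (hαN j)
    calc (∏ j : Fin m, L ((j : ℕ) + 1) ^ α j) / (∏ j : Fin m, L ((j : ℕ) + 1) ^ αs j)
        = ∏ j : Fin m, L ((j : ℕ) + 1) ^ α j / L ((j : ℕ) + 1) ^ αs j :=
          (Finset.prod_div_distrib _ _).symm
      _ ≤ ∏ j : Fin m, (if j = i then (L ((i : ℕ) + 1))⁻¹ else (L ((i : ℕ) + 2)) ^ N) := by
          refine Finset.prod_le_prod ?_ (fun j _ => key j)
          intro j _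
          have hLj1 : (1:ℝ) ≤ L ((j : ℕ) + 1) := hone _ (by omega)
          positivity
      _ = (L ((i : ℕ) + 1))⁻¹ * ∏ j ∈ Finset.univ.erase i,
            (if j = i then (L ((i : ℕ) + 1))⁻¹ else (L ((i : ℕ) + 2)) ^ N) := by
          rw [← Finset.mul_prod_erase Finset.univ _ (Finset.mem_univ i), if_pos rfl]
      _ = (L ((i : ℕ) + 1))⁻¹ * (L ((i : ℕ) + 2)) ^ (N * (m - 1)) := by
          rw [Finset.prod_congr rfl (fun j hj => if_neg (Finset.mem_erase.mp hj).1),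
            Finset.prod_const, Finset.card_erase_of_mem (Finset.mem_univ i),
            Finset.card_univ, Fintype.card_fin, ← pow_mul]
      _ = (iterLog ((i : ℕ) + 1) (X t))⁻¹ *
            (Real.log (iterLog ((i : ℕ) + 1) (X t))) ^ (N * (m - 1)) := rfl

theorem stmt5 (m : ℕ) (hm : 0 < m)
    (A : Finset (Fin m → ℕ)) (c : (Fin m → ℕ) → ℝ)
    (αs : Fin m → ℕ) (hαsA : αs ∈ A) (hcαs : 0 < c αs)
    (hdeg : 1 ≤ ∑ i, αs i)
    (hmax : ∀ α ∈ A, c α ≠ 0 → α ≠ αs →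
      ∃ i : Fin m, (∀ j : Fin m, j < i → α j = αs j) ∧ α i < αs i)
    (Q₁ : Polynomial ℝ) (hd : 1 ≤ Q₁.natDegree) (hlc : 0 < Q₁.leadingCoeff)
    (β : ℝ) (hβ : 0 < β)
    (ω : ℝ → ℝ)
    (hω : ∀ t : ℝ, ω t = ∑ α ∈ A, c α * ∏ i : Fin m,
      (iterLog ((i : ℕ) + 1) (Q₁.eval (t ^ β))) ^ (α i)) :
    (∃ T > (0:ℝ), (∀ t ≥ T, 0 < ω t) ∧ Tendsto ω atTop atTop) ∧
    ∀ lam > (0:ℝ),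
      Tendsto
        (fun t : ℝ =>
          ω t ^ (-lam) * ∏ i : Fin m, iterLog ((i : ℕ) + 1) t ^ (lam * (αs i : ℝ)))
        atTop
        (nhds ((c αs * (β * (Q₁.natDegree : ℝ)) ^ (αs ⟨0, hm⟩)) ^ (-lam))) := by
  classical
  set d := Q₁.natDegree with hddef
  set X : ℝ → ℝ := fun t => Q₁.eval (t ^ β) with hXdef
  have hX : Tendsto X atTop atTop := by
    have h1 : Tendsto (fun x : ℝ => Q₁.eval x) atTop atTop :=
      Q₁.tendsto_atTop_of_leadingCoeff_nonneg
        (Polynomial.natDegree_pos_iff_degree_pos.mp (by rw [← hddef]; omega)) hlc.le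
    exact h1.comp (tendsto_rpow_atTop hβ)
  -- base ratio
  have hbase : Tendsto (fun t => iterLog 1 (X t) / iterLog 1 t) atTop
      (nhds (β * (d : ℝ))) := by
    have hQ := logQ_ratio Q₁ hd hlc
    have h1 : Tendsto (fun t : ℝ => Real.log (Q₁.eval (t ^ β)) / Real.log (t ^ β))
        atTop (nhds (d : ℝ)) := hQ.comp (tendsto_rpow_atTop hβ)
    have h2 : Tendsto (fun t : ℝ => β * (Real.log (Q₁.eval (t ^ β)) / Real.log (t ^ β)))
        atTop (nhds (β * (d : ℝ))) := h1.const_mul β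
    refine h2.congr' ?_
    filter_upwards [eventually_gt_atTop 1] with t ht
    have ht0 : (0:ℝ) < t := lt_trans one_pos ht
    have hL : Real.log t ≠ 0 := (Real.log_pos ht).ne'
    show β * (Real.log (Q₁.eval (t ^ β)) / Real.log (t ^ β))
        = iterLog 1 (X t) / iterLog 1 t
    rw [Real.log_rpow ht0]
    show β * (Real.log (X t) / (β * Real.log t)) = Real.log (X t) / Real.log t
    field_simp
  -- ratio for every level
  have hratio : ∀ k : ℕ, Tendsto
      (fun t => iterLog (k + 1) (X t) / iterLog (k + 1) t) atTop
      (nhds (if k = 0 then β * (d : ℝ) else 1)) := by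
    intro k
    induction k with
    | zero => simpa using hbase
    | succ k ih =>
      rw [if_neg (Nat.succ_ne_zero k)]
      have hc : (0:ℝ) < if k = 0 then β * (d : ℝ) else 1 := by
        split
        · have : (1:ℝ) ≤ (d:ℝ) := by exact_mod_cast hd
          positivity
        · exact one_pos
      exact log_ratio_tendsto hc ih (iterLog_tendsto (k + 1)) (iterLog_tendsto (k + 2))
  -- dominant product
  set D : ℝ → ℝ := fun t => ∏ j : Fin m, iterLog ((j : ℕ) + 1) (X t) ^ αs j with hDdef
  have hall : ∀ᶠ t in atTop, ∀ j ∈ Finset.range (m + 2), 1 ≤ iterLog j (X t) := by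
    rw [eventually_all_finset]
    intro j _
    exact ((iterLog_tendsto j).comp hX).eventually_ge_atTop 1
  have hDpos : ∀ᶠ t in atTop, 0 < D t := by
    filter_upwards [hall] with t ht
    exact Finset.prod_pos fun j _ => pow_pos
      (lt_of_lt_of_le one_pos (ht _ (Finset.mem_range.mpr (by omega)))) _
  have hωD : Tendsto (fun t => ω t / D t) atTop (nhds (c αs)) := by
    have hsum : Tendsto (fun t => ∑ α ∈ A, c α *
        ((∏ j : Fin m, iterLog ((j : ℕ) + 1) (X t) ^ α j) / D t)) atTop
        (nhds (∑ α ∈ A, if α = αs then c αs else 0)) := by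
      refine tendsto_finset_sum _ ?_
      intro α hα
      by_cases hc0 : c α = 0
      · by_cases hae : α = αs
        · rw [hae] at hc0; exact absurd hc0 hcαs.ne'
        · rw [if_neg hae]
          simpa [hc0] using (tendsto_const_nhds : Tendsto (fun _ : ℝ => (0:ℝ)) atTop _)
      · by_cases hae : α = αs
        · subst hae
          rw [if_pos rfl]
          have : Tendsto (fun t : ℝ => c α * 1) atTop (nhds (c α * 1)) := tendsto_const_nhds
          rw [mul_one] at this
          refine this.congr' ?_
          filter_upwards [hDpos] with t hDt
          rw [show (∏ j : Fin m, iterLog ((j : ℕ) + 1) (X t) ^ α j) = D t from rfl,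
            div_self hDt.ne', mul_one]
        · obtain ⟨i, hi1, hi2⟩ := hmax α hα hc0 hae
          rw [if_neg hae]
          have := (prod_ratio_vanish m X hX α αs i hi1 hi2).const_mul (c α)
          simpa using this
    rw [Finset.sum_ite_eq' A αs (fun _ => c αs), if_pos hαsA] at hsum
    refine hsum.congr ?_
    intro t
    rw [hω t, Finset.sum_div]
    exact Finset.sum_congr rfl fun α _ => (mul_div_assoc _ _ _).symm
  -- D tends to infinity
  obtain ⟨i₀, hi₀⟩ : ∃ i : Fin m, αs i ≠ 0 := by
    by_contra h
    push_neg at h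
    simp only [h] at hdeg
    simp at hdeg
  have hDtop : Tendsto D atTop atTop := by
    refine tendsto_atTop_mono' atTop ?_ ((iterLog_tendsto ((i₀ : ℕ) + 1)).comp hX)
    filter_upwards [hall] with t ht
    have hone : ∀ j : Fin m, 1 ≤ iterLog ((j : ℕ) + 1) (X t) := fun j =>
      ht _ (Finset.mem_range.mpr (by omega))
    calc iterLog ((i₀ : ℕ) + 1) (X t)
        ≤ iterLog ((i₀ : ℕ) + 1) (X t) ^ αs i₀ := le_self_pow₀ (hone i₀) hi₀
      _ ≤ (iterLog ((i₀ : ℕ) + 1) (X t) ^ αs i₀) *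
            ∏ j ∈ Finset.univ.erase i₀, iterLog ((j : ℕ) + 1) (X t) ^ αs j := by
          refine le_mul_of_one_le_right (pow_nonneg ?_ _) ?_
          · exact le_trans zero_le_one (hone i₀)
          · calc (1:ℝ) = ∏ _j ∈ Finset.univ.erase i₀, (1:ℝ) := Finset.prod_const_one.symm
              _ ≤ ∏ j ∈ Finset.univ.erase i₀, iterLog ((j : ℕ) + 1) (X t) ^ αs j :=
                Finset.prod_le_prod (fun j _ => zero_le_one) (fun j _ => one_le_pow₀ (hone j))
      _ = D t := Finset.mul_prod_erase Finset.univ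
            (fun j : Fin m => iterLog ((j : ℕ) + 1) (X t) ^ αs j) (Finset.mem_univ i₀)
  have hwtop : Tendsto ω atTop atTop := by
    have := hωD.pos_mul_atTop hcαs hDtop
    refine this.congr' ?_
    filter_upwards [hDpos] with t hDt
    rw [div_mul_cancel₀ _ hDt.ne']
  constructor
  · -- first part
    obtain ⟨T₀, hT₀⟩ := eventually_atTop.mp (hwtop.eventually_gt_atTop 0)
    exact ⟨max T₀ 1, lt_of_lt_of_le one_pos (le_max_right _ _),
      fun t ht => hT₀ t (le_trans (le_max_left _ _) ht), hwtop⟩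
  · intro lam hlam
    set i₀ : Fin m := ⟨0, hm⟩ with hi₀def
    -- product of ratios
    have hprod : Tendsto (fun t => ∏ j : Fin m,
        (iterLog ((j : ℕ) + 1) (X t) / iterLog ((j : ℕ) + 1) t) ^ αs j) atTop
        (nhds (∏ j : Fin m, (if (j : ℕ) = 0 then β * (d : ℝ) else 1) ^ αs j)) := by
      refine tendsto_finset_prod _ ?_
      intro j _
      exact (hratio (j : ℕ)).pow _
    have hprodval : (∏ j : Fin m, (if (j : ℕ) = 0 then β * (d : ℝ) else 1) ^ αs j)
        = (β * (d : ℝ)) ^ αs i₀ := by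
      have : ∀ j : Fin m, (if (j : ℕ) = 0 then β * (d : ℝ) else 1) ^ αs j
          = if j = i₀ then (β * (d : ℝ)) ^ αs i₀ else 1 := by
        intro j
        by_cases h : j = i₀
        · subst h; simp [hi₀def]
        · have : (j : ℕ) ≠ 0 := by
            simp only [hi₀def] at h
            exact fun hc => h (Fin.ext hc)
          rw [if_neg this, if_neg h, one_pow]
      rw [Finset.prod_congr rfl (fun j _ => this j), Fintype.prod_ite_eq']
    rw [hprodval] at hprod
    have hK : (0:ℝ) < c αs * (β * (d : ℝ)) ^ αs i₀ := by
      have h1 : (1:ℝ) ≤ (d:ℝ) := by exact_mod_cast hd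
      positivity
    have hh : Tendsto (fun t => (ω t / D t) * ∏ j : Fin m,
        (iterLog ((j : ℕ) + 1) (X t) / iterLog ((j : ℕ) + 1) t) ^ αs j) atTop
        (nhds (c αs * (β * (d : ℝ)) ^ αs i₀)) := hωD.mul hprod
    have hfinal := hh.rpow_const (p := -lam) (Or.inl hK.ne')
    refine hfinal.congr' ?_
    -- eventual equality
    have hGall : ∀ᶠ t in atTop, ∀ j ∈ Finset.range (m + 2), 1 ≤ iterLog j t := by
      rw [eventually_all_finset]
      intro j _
      exact (iterLog_tendsto j).eventually_ge_atTop 1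
    filter_upwards [hall, hGall, hDpos, hwtop.eventually_gt_atTop 0] with t hLt hGt hDt hωt
    have hGpos : ∀ j : Fin m, 0 < iterLog ((j : ℕ) + 1) t := fun j =>
      lt_of_lt_of_le one_pos (hGt _ (Finset.mem_range.mpr (by omega)))
    have hLpos : ∀ j : Fin m, 0 < iterLog ((j : ℕ) + 1) (X t) := fun j =>
      lt_of_lt_of_le one_pos (hLt _ (Finset.mem_range.mpr (by omega)))
    set P : ℝ := ∏ j : Fin m, iterLog ((j : ℕ) + 1) t ^ αs j with hPdef
    have hPpos : 0 < P := Finset.prod_pos fun j _ => pow_pos (hGpos j) _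
    have hsimp : (ω t / D t) * ∏ j : Fin m,
        (iterLog ((j : ℕ) + 1) (X t) / iterLog ((j : ℕ) + 1) t) ^ αs j = ω t / P := by
      rw [Finset.prod_congr rfl (fun j _ => div_pow _ _ _), Finset.prod_div_distrib,
        show (∏ j : Fin m, iterLog ((j : ℕ) + 1) (X t) ^ αs j) = D t from rfl, ← hPdef]
      field_simp
    rw [hsimp]
    -- now (ω t / P) ^ (-lam) = ω t ^ (-lam) * ∏ G ^ (lam * αs j)
    have hstep : (ω t / P) ^ (-lam) = ω t ^ (-lam) * P ^ lam := by
      rw [Real.div_rpow hωt.le hPpos.le, Real.rpow_neg hPpos.le, div_inv_eq_mul]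
    rw [hstep]
    congr 1
    rw [hPdef, ← Real.finset_prod_rpow _ _ (fun j _ => pow_nonneg (hGpos j).le _) lam]
    refine Finset.prod_congr rfl ?_
    intro j _
    rw [← Real.rpow_natCast (iterLog ((j : ℕ) + 1) t) (αs j),
      ← Real.rpow_mul (hGpos j).le, mul_comm]
end

section
/- Let m ∈ ℕ, let L_k denote the k-fold iterated natural logarithm and 𝓛_m(t) = (L₁(t),…,L_m(t)). Let Q₀(z) = Σ_α c_α z^α be a real polynomial in m variables whose lexicographically largest multi-index α* with c_{α*} ≠ 0 satisfies |α*| ≥ 1 and c_{α*} > 0; let Q₁ be a real one-variable polynomial of degree d ≥ 1 with positive leading coefficient, let β > 0, and define ω(t) = Q₀(𝓛_m(Q₁(t^β))). Then: (i) there exists T > 0 such that ω is differentiable with ω'(t) > 0 for all t ≥ T (so each ω(t)^{−λ} is eventually positive and strictly decreasing); and (ii) for every λ > 0, |d/dt (ω(t)^{−λ})| = O(t^{−1}) as t → ∞, and consequently |d/dt (ω(t)^{−λ})| = O(ω(t)^{−μ}) as t → ∞ for every μ > 0. -/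
open Filter

def GoodAt (K : ℕ) (y : ℝ) : Prop := ∀ j < K, Real.exp 1 < iterLog j y

lemma one_lt_exp_one : (1:ℝ) < Real.exp 1 := by linarith [Real.add_one_le_exp (1:ℝ)]

lemma GoodAt.pos {K y} (h : GoodAt K y) {j : ℕ} (hj : j < K) : 0 < iterLog j y :=
  lt_trans (Real.exp_pos 1) (h j hj)

lemma GoodAt.one_le {K y} (h : GoodAt K y) {j : ℕ} (hj : j < K) : 1 ≤ iterLog j y :=
  (one_lt_exp_one.trans (h j hj)).le

lemma GoodAt.anti {K y} (h : GoodAt K y) :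
    ∀ {j2}, j2 < K → ∀ {j1}, j1 ≤ j2 → iterLog j2 y ≤ iterLog j1 y := by
  intro j2
  induction j2 with
  | zero => intro _ j1 h12; simp [Nat.le_zero.mp h12]
  | succ k ih =>
    intro h2 j1 h12
    have hk : iterLog (k+1) y ≤ iterLog k y := by
      have hpos : 0 < iterLog k y := h.pos (Nat.lt_of_succ_lt h2)
      calc iterLog (k+1) y = Real.log (iterLog k y) := rfl
        _ ≤ iterLog k y - 1 := Real.log_le_sub_one_of_pos hpos
        _ ≤ iterLog k y := by linarith
    rcases Nat.eq_or_lt_of_le h12 with heq | hlt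
    · simp [heq]
    · exact hk.trans (ih (Nat.lt_of_succ_lt h2) (Nat.lt_succ_iff.mp hlt))

lemma one_le_prod_real {ι : Type*} {s : Finset ι} {f : ι → ℝ} (h : ∀ i ∈ s, 1 ≤ f i) :
    1 ≤ ∏ i ∈ s, f i := by
  calc (1:ℝ) = ∏ _i ∈ s, 1 := by simp
    _ ≤ ∏ i ∈ s, f i := Finset.prod_le_prod (fun i _ => zero_le_one) h

lemma iterLog_tendsto_s7 : ∀ k : ℕ, Filter.Tendsto (iterLog k) Filter.atTop Filter.atTop
  | 0 => Filter.tendsto_id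
  | k + 1 => Real.tendsto_log_atTop.comp (iterLog_tendsto_s7 k)

lemma poly_bounds {p : Polynomial ℝ} (hp : 0 < p.leadingCoeff) :
    ∀ᶠ x in Filter.atTop, p.leadingCoeff / 2 * x ^ p.natDegree ≤ p.eval x ∧
      p.eval x ≤ 2 * p.leadingCoeff * x ^ p.natDegree := by
  have h := (Polynomial.isEquivalent_atTop_lead p).isLittleO.def one_half_pos
  filter_upwards [h, Filter.eventually_ge_atTop (0:ℝ)] with x hx hx0
  have hg : 0 ≤ p.leadingCoeff * x ^ p.natDegree := by positivity
  simp only [Pi.sub_apply, Real.norm_eq_abs] at hx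
  rw [abs_of_nonneg hg] at hx
  have := abs_le.mp hx
  constructor <;> nlinarith [this.1, this.2]

noncomputable def Rf (y : ℝ) (k : ℕ) : ℝ := ∏ j ∈ Finset.range k, iterLog (j+1) y

noncomputable def Mf {m : ℕ} (α : Fin m → ℕ) (y : ℝ) : ℝ :=
  ∏ i : Fin m, iterLog ((i:ℕ)+1) y ^ α i

noncomputable def Sf {m : ℕ} (α : Fin m → ℕ) (y : ℝ) : ℝ :=
  ∑ i : Fin m, (α i : ℝ) / Rf y ((i:ℕ)+1)

section RMS
variable {m K : ℕ} {y : ℝ} {α αs : Fin m → ℕ}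

lemma Rf_pos (h : GoodAt K y) {k : ℕ} (hk : k < K) : 0 < Rf y k := by
  unfold Rf
  refine Finset.prod_pos ?_
  intro j hj
  rw [Finset.mem_range] at hj
  exact h.pos (by omega)

lemma one_le_Rf (h : GoodAt K y) {k : ℕ} (hk : k < K) : 1 ≤ Rf y k := by
  unfold Rf
  refine one_le_prod_real ?_
  intro j hj
  rw [Finset.mem_range] at hj
  exact h.one_le (by omega)

lemma Rf_mono (h : GoodAt K y) {k1 k2 : ℕ} (h12 : k1 ≤ k2) (hk : k2 < K) :
    Rf y k1 ≤ Rf y k2 := by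
  obtain ⟨n, rfl⟩ := Nat.exists_eq_add_of_le h12
  unfold Rf
  rw [Finset.prod_range_add]
  refine le_mul_of_one_le_right ?_ ?_
  · exact Finset.prod_nonneg fun j hj => (h.pos (by
      rw [Finset.mem_range] at hj; omega)).le
  · refine one_le_prod_real ?_
    intro j hj
    rw [Finset.mem_range] at hj
    exact h.one_le (by omega)

lemma Mf_pos (h : GoodAt (m+2) y) : 0 < Mf α y := by
  unfold Mf
  refine Finset.prod_pos ?_
  intro i _
  exact pow_pos (h.pos (by have := i.isLt; omega)) _

lemma one_le_Mf (h : GoodAt (m+2) y) : 1 ≤ Mf α y := by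
  unfold Mf
  refine one_le_prod_real ?_
  intro i _
  exact one_le_pow₀ (h.one_le (by have := i.isLt; omega))

lemma Mf_le (h : GoodAt (m+2) y) : Mf α y ≤ iterLog 1 y ^ (∑ i, α i) := by
  unfold Mf
  rw [← Finset.prod_pow_eq_pow_sum]
  refine Finset.prod_le_prod (fun i _ => pow_nonneg (h.pos (by have := i.isLt; omega)).le _) ?_
  intro i _
  exact pow_le_pow_left₀ (h.pos (by have := i.isLt; omega)).le
    (h.anti (j2 := (i:ℕ)+1) (by have := i.isLt; omega) (by omega)) _

lemma Sf_nonneg (h : GoodAt (m+2) y) : 0 ≤ Sf α y :=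
  Finset.sum_nonneg fun i _ => div_nonneg (Nat.cast_nonneg _)
    (Rf_pos h (K := m+2) (by have := i.isLt; omega)).le

lemma Sf_le (h : GoodAt (m+2) y) : Sf α y ≤ ∑ i, (α i : ℝ) :=
  Finset.sum_le_sum fun i _ => div_le_self (Nat.cast_nonneg _)
    (one_le_Rf h (by have := i.isLt; omega))

lemma le_Sf (h : GoodAt (m+2) y) {i₀ : Fin m} (hα : 1 ≤ αs i₀) :
    1 / Rf y ((i₀:ℕ)+1) ≤ Sf αs y := by
  have hR : (0:ℝ) < Rf y ((i₀:ℕ)+1) := Rf_pos h (by have := i₀.isLt; omega)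
  have h1 : (1:ℝ) / Rf y ((i₀:ℕ)+1) ≤ (αs i₀ : ℝ) / Rf y ((i₀:ℕ)+1) := by
    gcongr
    exact_mod_cast hα
  exact h1.trans (Finset.single_le_sum (f := fun j : Fin m => (αs j : ℝ) / Rf y ((j:ℕ)+1))
    (fun j _ => div_nonneg (Nat.cast_nonneg _) (Rf_pos h (by have := j.isLt; omega)).le)
    (Finset.mem_univ i₀))

lemma claim2 (h : GoodAt (m+2) y) (i₀ : Fin m)
    (hagree : ∀ j : Fin m, j < i₀ → α j = αs j) (hlt : α i₀ < αs i₀) :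
    Sf α y ≤ (∑ i, (α i : ℝ)) * Sf αs y := by
  have hSnn := Sf_nonneg (α := αs) h
  rw [Finset.sum_mul]
  refine Finset.sum_le_sum ?_
  intro i _
  rcases Nat.eq_zero_or_pos (α i) with h0 | h1
  · simp [h0, hSnn]
  by_cases hi : i < i₀
  · have : ((α i : ℝ)) / Rf y ((i:ℕ)+1) ≤ Sf αs y := by
      rw [hagree i hi]
      exact Finset.single_le_sum (f := fun j : Fin m => (αs j : ℝ) / Rf y ((j:ℕ)+1))
        (fun j _ => div_nonneg (Nat.cast_nonneg _) (Rf_pos h (by have := j.isLt; omega)).le)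
        (Finset.mem_univ i)
    calc (α i : ℝ) / Rf y ((i:ℕ)+1) ≤ Sf αs y := this
      _ ≤ (α i : ℝ) * Sf αs y := le_mul_of_one_le_left hSnn (by exact_mod_cast h1)
  · push_neg at hi
    have hfin : (i₀:ℕ) ≤ (i:ℕ) := hi
    have hR : Rf y ((i₀:ℕ)+1) ≤ Rf y ((i:ℕ)+1) := Rf_mono h (by omega) (by have := i.isLt; omega)
    have hS' : 1 / Rf y ((i₀:ℕ)+1) ≤ Sf αs y := le_Sf h (by omega)
    calc (α i : ℝ) / Rf y ((i:ℕ)+1) ≤ (α i : ℝ) / Rf y ((i₀:ℕ)+1) := by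
          gcongr
          exact Rf_pos h (by have := i₀.isLt; omega)
      _ = (α i : ℝ) * (1 / Rf y ((i₀:ℕ)+1)) := by ring
      _ ≤ (α i : ℝ) * Sf αs y := by
          exact mul_le_mul_of_nonneg_left hS' (Nat.cast_nonneg _)

lemma claim1 (h : GoodAt (m+2) y) (i₀ : Fin m)
    (hagree : ∀ j : Fin m, j < i₀ → α j = αs j) (hlt : α i₀ < αs i₀) :
    Mf α y * iterLog ((i₀:ℕ)+1) y ≤ Mf αs y * iterLog ((i₀:ℕ)+2) y ^ (∑ i, α i) := by
  have key : ∀ i : Fin m,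
      iterLog ((i:ℕ)+1) y ^ α i * (if i = i₀ then iterLog ((i₀:ℕ)+1) y else 1)
      ≤ iterLog ((i:ℕ)+1) y ^ αs i * iterLog ((i₀:ℕ)+2) y ^ α i := by
    intro i
    have ha1 : (1:ℝ) ≤ iterLog ((i:ℕ)+1) y := h.one_le (by have := i.isLt; omega)
    have hb1 : (1:ℝ) ≤ iterLog ((i₀:ℕ)+2) y := h.one_le (by have := i₀.isLt; omega)
    rcases lt_trichotomy i i₀ with hi | hi | hi
    · rw [if_neg hi.ne, hagree i hi, mul_one]
      exact le_mul_of_one_le_right (pow_nonneg (by linarith) _) (one_le_pow₀ hb1)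
    · subst hi
      rw [if_pos rfl, ← pow_succ]
      calc iterLog ((i:ℕ)+1) y ^ (α i + 1) ≤ iterLog ((i:ℕ)+1) y ^ αs i :=
            pow_le_pow_right₀ ha1 (by omega)
        _ ≤ iterLog ((i:ℕ)+1) y ^ αs i * iterLog ((i:ℕ)+2) y ^ α i :=
            le_mul_of_one_le_right (pow_nonneg (by linarith) _) (one_le_pow₀ hb1)
    · rw [if_neg hi.ne', mul_one]
      have hii : (i₀:ℕ) < (i:ℕ) := hi
      have hab : iterLog ((i:ℕ)+1) y ≤ iterLog ((i₀:ℕ)+2) y :=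
        h.anti (j2 := (i:ℕ)+1) (by have := i.isLt; omega) (by omega)
      calc iterLog ((i:ℕ)+1) y ^ α i ≤ iterLog ((i₀:ℕ)+2) y ^ α i :=
            pow_le_pow_left₀ (by linarith) hab _
        _ ≤ iterLog ((i:ℕ)+1) y ^ αs i * iterLog ((i₀:ℕ)+2) y ^ α i :=
            le_mul_of_one_le_left (pow_nonneg (by linarith) _) (one_le_pow₀ ha1)
  calc Mf α y * iterLog ((i₀:ℕ)+1) y
      = ∏ i : Fin m, (iterLog ((i:ℕ)+1) y ^ α i *
          (if i = i₀ then iterLog ((i₀:ℕ)+1) y else 1)) := by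
        rw [Finset.prod_mul_distrib, Finset.prod_ite_eq' Finset.univ i₀
          (fun _ => iterLog ((i₀:ℕ)+1) y)]
        simp [Mf]
    _ ≤ ∏ i : Fin m, (iterLog ((i:ℕ)+1) y ^ αs i * iterLog ((i₀:ℕ)+2) y ^ α i) := by
        refine Finset.prod_le_prod ?_ (fun i _ => key i)
        intro i _
        have h1 := h.pos (j := (i:ℕ)+1) (by have := i.isLt; omega)
        have h2 := h.pos (j := (i₀:ℕ)+1) (by have := i₀.isLt; omega)
        positivity
    _ = Mf αs y * iterLog ((i₀:ℕ)+2) y ^ (∑ i, α i) := by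
        rw [Finset.prod_mul_distrib, Finset.prod_pow_eq_pow_sum]
        rfl

end RMS

lemma hasDerivAt_iterLog_comp' {f : ℝ → ℝ} {f' x : ℝ} (hf : HasDerivAt f f' x) :
    ∀ (k : ℕ), (∀ j < k, iterLog j (f x) ≠ 0) →
    HasDerivAt (fun t => iterLog k (f t)) (f' / ∏ j ∈ Finset.range k, iterLog j (f x)) x
  | 0, _ => by simpa [iterLog] using hf
  | k + 1, h => by
    have ih := hasDerivAt_iterLog_comp' hf k (fun j hj => h j (hj.trans (Nat.lt_succ_self k)))
    have h2 := ih.log (h k (Nat.lt_succ_self k))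
    simpa [iterLog, Finset.prod_range_succ, div_div] using h2

lemma hasDerivAt_Mf {m : ℕ} (α : Fin m → ℕ) {u : ℝ → ℝ} {u' t : ℝ}
    (hu : HasDerivAt u u' t) (h : GoodAt (m+2) (u t)) :
    HasDerivAt (fun s => Mf α (u s)) (Mf α (u t) * ((u' / u t) * Sf α (u t))) t := by
  have hf : ∀ i ∈ (Finset.univ : Finset (Fin m)),
      HasDerivAt (fun s => iterLog ((i:ℕ)+1) (u s) ^ α i)
      ((α i : ℝ) * iterLog ((i:ℕ)+1) (u t) ^ (α i - 1) *
        (u' / ∏ j ∈ Finset.range ((i:ℕ)+1), iterLog j (u t))) t := by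
    intro i _
    exact (hasDerivAt_iterLog_comp' hu ((i:ℕ)+1)
      (fun j hj => (h.pos (by have := i.isLt; omega)).ne')).pow (α i)
  have hp := HasDerivAt.fun_finsetProd hf
  have key : Mf α (u t) * ((u' / u t) * Sf α (u t)) =
      ∑ i : Fin m, (∏ j ∈ Finset.univ.erase i, iterLog ((j:ℕ)+1) (u t) ^ α j) •
        ((α i : ℝ) * iterLog ((i:ℕ)+1) (u t) ^ (α i - 1) *
          (u' / ∏ j ∈ Finset.range ((i:ℕ)+1), iterLog j (u t))) := by
    unfold Mf Sf
    rw [Finset.mul_sum, Finset.mul_sum]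
    refine Finset.sum_congr rfl ?_
    intro i _
    have hu0 : u t ≠ 0 := (h.pos (j := 0) (by omega)).ne'
    have hR0 : Rf (u t) (i:ℕ) ≠ 0 := (Rf_pos h (by have := i.isLt; omega)).ne'
    have ha0 : iterLog ((i:ℕ)+1) (u t) ≠ 0 := (h.pos (by have := i.isLt; omega)).ne'
    have hMsplit : (∏ i' : Fin m, iterLog ((i':ℕ)+1) (u t) ^ α i') =
        iterLog ((i:ℕ)+1) (u t) ^ α i *
          ∏ j ∈ Finset.univ.erase i, iterLog ((j:ℕ)+1) (u t) ^ α j :=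
      (Finset.mul_prod_erase Finset.univ _ (Finset.mem_univ i)).symm
    have hRsucc : Rf (u t) ((i:ℕ)+1) = Rf (u t) (i:ℕ) * iterLog ((i:ℕ)+1) (u t) :=
      Finset.prod_range_succ _ _
    have hPsplit : (∏ j ∈ Finset.range ((i:ℕ)+1), iterLog j (u t)) =
        Rf (u t) (i:ℕ) * u t := by
      rw [Finset.prod_range_succ']; rfl
    rw [smul_eq_mul, hMsplit, hRsucc, hPsplit]
    rcases Nat.eq_zero_or_pos (α i) with h0 | h1
    · simp [h0]
    · obtain ⟨n, hn⟩ : ∃ n, α i = n + 1 := ⟨α i - 1, by omega⟩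
      rw [hn]
      simp only [Nat.add_sub_cancel, pow_succ, Nat.cast_add, Nat.cast_one]
      field_simp
  rw [key]
  exact hp

set_option maxHeartbeats 1000000 in
open Real in
theorem stmt7 (m : ℕ) (hm : 0 < m)
    (A : Finset (Fin m → ℕ)) (c : (Fin m → ℕ) → ℝ)
    (αs : Fin m → ℕ) (hαsA : αs ∈ A) (hcαs : 0 < c αs)
    (hdeg : 1 ≤ ∑ i, αs i)
    (hmax : ∀ α ∈ A, c α ≠ 0 → α ≠ αs →
      ∃ i : Fin m, (∀ j : Fin m, j < i → α j = αs j) ∧ α i < αs i)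
    (Q₁ : Polynomial ℝ) (hd : 1 ≤ Q₁.natDegree) (hlc : 0 < Q₁.leadingCoeff)
    (β : ℝ) (hβ : 0 < β)
    (ω : ℝ → ℝ)
    (hω : ∀ t : ℝ, ω t = ∑ α ∈ A, c α * ∏ i : Fin m,
      (iterLog ((i : ℕ) + 1) (Q₁.eval (t ^ β))) ^ (α i)) :
    (∃ T > (0:ℝ), (∀ t ≥ T, 0 < ω t) ∧
      (∀ t ≥ T, DifferentiableAt ℝ ω t ∧ 0 < deriv ω t) ∧
      ∀ lam > (0:ℝ), (∀ t ≥ T, 0 < ω t ^ (-lam)) ∧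
        StrictAntiOn (fun s : ℝ => ω s ^ (-lam)) (Set.Ici T)) ∧
    ∀ lam > (0:ℝ),
      (∃ C > (0:ℝ), ∃ T₀ : ℝ, ∀ t ≥ T₀,
        |deriv (fun s : ℝ => ω s ^ (-lam)) t| ≤ C * t⁻¹) ∧
      ∀ μ > (0:ℝ), ∃ C > (0:ℝ), ∃ T₀ : ℝ, ∀ t ≥ T₀,
        |deriv (fun s : ℝ => ω s ^ (-lam)) t| ≤ C * ω t ^ (-μ) := by
  classical
  set d := Q₁.natDegree with hd_def
  set u : ℝ → ℝ := fun t => Q₁.eval (t ^ β) with hu_def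
  set v : ℝ → ℝ := fun t => Q₁.derivative.eval (t ^ β) * (β * t ^ (β - 1)) with hv_def
  set G : ℝ → ℝ := fun t => ∑ α ∈ A, c α * (Mf α (u t) * Sf α (u t)) with hG_def
  have hω' : ∀ t, ω t = ∑ α ∈ A, c α * Mf α (u t) := by
    intro t; rw [hω]; rfl
  -- basic limits
  have hu_t : Tendsto u atTop atTop :=
    (Polynomial.tendsto_atTop_of_leadingCoeff_nonneg Q₁
      (Polynomial.natDegree_pos_iff_degree_pos.mp (by omega)) hlc.le).comp
      (tendsto_rpow_atTop hβ)
  have hLt : ∀ k, Tendsto (fun t => iterLog k (u t)) atTop atTop :=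
    fun k => (iterLog_tendsto_s7 k).comp hu_t
  have hGood : ∀ᶠ t in atTop, GoodAt (m+2) (u t) := by
    have h1 : ∀ᶠ t in atTop, ∀ j ∈ Finset.range (m+2), Real.exp 1 < iterLog j (u t) :=
      (Filter.eventually_all_finset _).mpr fun j _ => (hLt j).eventually_gt_atTop _
    exact h1.mono fun t ht j hj => ht j (Finset.mem_range.mpr hj)
  have hDu : ∀ᶠ t in atTop, HasDerivAt u (v t) t := by
    filter_upwards [eventually_gt_atTop (0:ℝ)] with t ht
    have h1 : HasDerivAt (fun s : ℝ => s ^ β) (β * t ^ (β-1)) t :=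
      Real.hasDerivAt_rpow_const (Or.inl ht.ne')
    exact (Q₁.hasDerivAt (t ^ β)).comp t h1
  -- derivative of ω
  have hωd : ∀ t, GoodAt (m+2) (u t) → HasDerivAt u (v t) t →
      HasDerivAt ω (v t / u t * G t) t := by
    intro t hg hdu
    have h1 : HasDerivAt (fun s => ∑ α ∈ A, c α * Mf α (u s))
        (∑ α ∈ A, c α * (Mf α (u t) * ((v t / u t) * Sf α (u t)))) t :=
      HasDerivAt.fun_sum fun α _ => (hasDerivAt_Mf α hdu hg).const_mul (c α)
    have hfun : (fun s => ∑ α ∈ A, c α * Mf α (u s)) = ω :=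
      funext fun s => (hω' s).symm
    rw [hfun] at h1
    convert h1 using 1
    rw [hG_def, Finset.mul_sum]
    exact Finset.sum_congr rfl fun α _ => by ring
  -- domination of the leading monomial
  have hdomM : ∀ α ∈ A, c α ≠ 0 → α ≠ αs → ∀ ε > (0:ℝ),
      ∀ᶠ t in atTop, Mf α (u t) ≤ ε * Mf αs (u t) := by
    intro α hA hc hne ε hε
    obtain ⟨i₀, hagree, hlt⟩ := hmax α hA hc hne
    set Nα := ∑ i, α i with hNα
    have hlog : Tendsto (fun x : ℝ => Real.log x ^ Nα / x) atTop (nhds 0) := by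
      have h1 : (fun x : ℝ => Real.log x ^ (Nα:ℝ)) =o[atTop] fun x : ℝ => x ^ (1:ℝ) :=
        isLittleO_log_rpow_rpow_atTop _ one_pos
      simp only [Real.rpow_natCast, Real.rpow_one] at h1
      exact h1.tendsto_div_nhds_zero
    have h2 : ∀ᶠ t in atTop,
        Real.log (iterLog ((i₀:ℕ)+1) (u t)) ^ Nα / iterLog ((i₀:ℕ)+1) (u t) < ε :=
      (hlog.comp (hLt ((i₀:ℕ)+1))).eventually_lt_const hε
    filter_upwards [hGood, h2] with t hg h2
    have hℓpos : 0 < iterLog ((i₀:ℕ)+1) (u t) := hg.pos (by have := i₀.isLt; omega)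
    have h3 : iterLog ((i₀:ℕ)+2) (u t) ^ Nα ≤ ε * iterLog ((i₀:ℕ)+1) (u t) := by
      have := (div_lt_iff₀ hℓpos).mp h2
      calc iterLog ((i₀:ℕ)+2) (u t) ^ Nα
          = Real.log (iterLog ((i₀:ℕ)+1) (u t)) ^ Nα := rfl
        _ ≤ ε * iterLog ((i₀:ℕ)+1) (u t) := this.le
    have hc1 := claim1 hg i₀ hagree hlt
    have hM := Mf_pos (α := αs) hg
    have hM2 := Mf_pos (α := α) hg
    nlinarith [hc1, mul_le_mul_of_nonneg_left h3 hM.le]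
  have hdomMS : ∀ α ∈ A, c α ≠ 0 → α ≠ αs → ∀ ε > (0:ℝ),
      ∀ᶠ t in atTop, Mf α (u t) * Sf α (u t) ≤ ε * (Mf αs (u t) * Sf αs (u t)) := by
    intro α hA hc hne ε hε
    obtain ⟨i₀, hagree, hlt⟩ := hmax α hA hc hne
    have hε' : (0:ℝ) < ε / (∑ i, (α i : ℝ) + 1) := by positivity
    filter_upwards [hGood, hdomM α hA hc hne _ hε'] with t hg hM
    have hc2 := claim2 hg i₀ hagree hlt
    have hSnn := Sf_nonneg (α := α) hg
    have hSnn' := Sf_nonneg (α := αs) hg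
    have hMpos := Mf_pos (α := αs) hg
    have hMpos2 := Mf_pos (α := α) hg
    have hNnn : (0:ℝ) ≤ ∑ i, (α i : ℝ) := Finset.sum_nonneg fun i _ => Nat.cast_nonneg _
    have h1 : Mf α (u t) * Sf α (u t) ≤
        (ε / (∑ i, (α i : ℝ) + 1) * Mf αs (u t)) * ((∑ i, (α i : ℝ)) * Sf αs (u t)) := by
      apply mul_le_mul hM hc2 hSnn (by positivity)
    calc Mf α (u t) * Sf α (u t)
        ≤ (ε / (∑ i, (α i : ℝ) + 1) * Mf αs (u t)) * ((∑ i, (α i : ℝ)) * Sf αs (u t)) := h1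
      _ = ε * ((∑ i, (α i:ℝ)) / ((∑ i, (α i : ℝ)) + 1)) * (Mf αs (u t) * Sf αs (u t)) := by
          ring
      _ ≤ ε * 1 * (Mf αs (u t) * Sf αs (u t)) := by
          apply mul_le_mul_of_nonneg_right ?_ (by positivity)
          apply mul_le_mul_of_nonneg_left ?_ hε.le
          rw [div_le_one (by positivity)]
          linarith
      _ = ε * (Mf αs (u t) * Sf αs (u t)) := by ring
  have hcard : (0:ℕ) < A.card := Finset.card_pos.mpr ⟨αs, hαsA⟩
  have hsum1 : ∀ᶠ t in atTop, (∑ α ∈ A.erase αs, |c α| * Mf α (u t)) ≤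
      c αs / 2 * Mf αs (u t) := by
    have hper : ∀ α ∈ A.erase αs, ∀ᶠ t in atTop,
        |c α| * Mf α (u t) ≤ c αs / (2 * A.card) * Mf αs (u t) := by
      intro α hα
      obtain ⟨hne, hA⟩ := Finset.mem_erase.mp hα
      rcases eq_or_ne (c α) 0 with h0 | h0
      · filter_upwards [hGood] with t hg
        rw [h0]
        simp only [abs_zero, zero_mul]
        have := (Mf_pos (α := αs) hg).le
        positivity
      · have hε : (0:ℝ) < c αs / (2 * A.card) / |c α| := by positivity
        filter_upwards [hdomM α hA h0 hne _ hε] with t hM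
        calc |c α| * Mf α (u t)
            ≤ |c α| * (c αs / (2*A.card) / |c α| * Mf αs (u t)) :=
              mul_le_mul_of_nonneg_left hM (abs_nonneg (c α))
          _ = c αs / (2*A.card) * Mf αs (u t) := by
              field_simp
    have hall := (Filter.eventually_all_finset (A.erase αs)).mpr hper
    filter_upwards [hall, hGood] with t hall hg
    have hMnn := (Mf_pos (α := αs) hg).le
    calc ∑ α ∈ A.erase αs, |c α| * Mf α (u t)
        ≤ ∑ _α ∈ A.erase αs, c αs/(2*A.card) * Mf αs (u t) := Finset.sum_le_sum hall
      _ = (A.erase αs).card * (c αs/(2*A.card) * Mf αs (u t)) := by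
          rw [Finset.sum_const, nsmul_eq_mul]
      _ ≤ A.card * (c αs/(2*A.card) * Mf αs (u t)) := by
          have h1 : ((A.erase αs).card : ℝ) ≤ A.card := by
            exact_mod_cast Finset.card_le_card (Finset.erase_subset _ _)
          apply mul_le_mul_of_nonneg_right h1 (by positivity)
      _ = c αs / 2 * Mf αs (u t) := by
          have : (A.card : ℝ) ≠ 0 := by positivity
          field_simp
  have hsum2 : ∀ᶠ t in atTop, (∑ α ∈ A.erase αs, |c α| * (Mf α (u t) * Sf α (u t))) ≤
      c αs / 2 * (Mf αs (u t) * Sf αs (u t)) := by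
    have hper : ∀ α ∈ A.erase αs, ∀ᶠ t in atTop,
        |c α| * (Mf α (u t) * Sf α (u t)) ≤
          c αs / (2 * A.card) * (Mf αs (u t) * Sf αs (u t)) := by
      intro α hα
      obtain ⟨hne, hA⟩ := Finset.mem_erase.mp hα
      rcases eq_or_ne (c α) 0 with h0 | h0
      · filter_upwards [hGood] with t hg
        rw [h0]
        simp only [abs_zero, zero_mul]
        have h1 := (Mf_pos (α := αs) hg).le
        have h2 := Sf_nonneg (α := αs) hg
        positivity
      · have hε : (0:ℝ) < c αs / (2 * A.card) / |c α| := by positivity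
        filter_upwards [hdomMS α hA h0 hne _ hε] with t hM
        calc |c α| * (Mf α (u t) * Sf α (u t))
            ≤ |c α| * (c αs / (2*A.card) / |c α| * (Mf αs (u t) * Sf αs (u t))) :=
              mul_le_mul_of_nonneg_left hM (abs_nonneg (c α))
          _ = c αs / (2*A.card) * (Mf αs (u t) * Sf αs (u t)) := by
              field_simp
    have hall := (Filter.eventually_all_finset (A.erase αs)).mpr hper
    filter_upwards [hall, hGood] with t hall hg
    have hMnn := (Mf_pos (α := αs) hg).le
    have hSnn := Sf_nonneg (α := αs) hg
    calc ∑ α ∈ A.erase αs, |c α| * (Mf α (u t) * Sf α (u t))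
        ≤ ∑ _α ∈ A.erase αs, c αs/(2*A.card) * (Mf αs (u t) * Sf αs (u t)) :=
          Finset.sum_le_sum hall
      _ = (A.erase αs).card * (c αs/(2*A.card) * (Mf αs (u t) * Sf αs (u t))) := by
          rw [Finset.sum_const, nsmul_eq_mul]
      _ ≤ A.card * (c αs/(2*A.card) * (Mf αs (u t) * Sf αs (u t))) := by
          have h1 : ((A.erase αs).card : ℝ) ≤ A.card := by
            exact_mod_cast Finset.card_le_card (Finset.erase_subset _ _)
          apply mul_le_mul_of_nonneg_right h1 (by positivity)
      _ = c αs / 2 * (Mf αs (u t) * Sf αs (u t)) := by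
          have : (A.card : ℝ) ≠ 0 := by positivity
          field_simp
  have hωb : ∀ᶠ t in atTop,
      c αs/2 * Mf αs (u t) ≤ ω t ∧ ω t ≤ 2 * c αs * Mf αs (u t) := by
    filter_upwards [hGood, hsum1] with t hg hs
    have hsplit : ω t = c αs * Mf αs (u t) + ∑ α ∈ A.erase αs, c α * Mf α (u t) := by
      rw [hω']
      exact (Finset.add_sum_erase A _ hαsA).symm
    have habs : |∑ α ∈ A.erase αs, c α * Mf α (u t)| ≤
        ∑ α ∈ A.erase αs, |c α| * Mf α (u t) := by
      refine (Finset.abs_sum_le_sum_abs _ _).trans ?_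
      refine Finset.sum_le_sum fun α hα => ?_
      rw [abs_mul, abs_of_nonneg (Mf_pos hg).le]
    have hM := (Mf_pos (α := αs) hg).le
    have h2 := abs_le.mp (habs.trans hs)
    constructor <;> linarith [h2.1, h2.2, hsplit, mul_nonneg hcαs.le hM]
  have hGb : ∀ᶠ t in atTop,
      c αs/2 * (Mf αs (u t) * Sf αs (u t)) ≤ G t ∧
        G t ≤ 2 * c αs * (Mf αs (u t) * Sf αs (u t)) := by
    filter_upwards [hGood, hsum2] with t hg hs
    have hsplit : G t = c αs * (Mf αs (u t) * Sf αs (u t)) +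
        ∑ α ∈ A.erase αs, c α * (Mf α (u t) * Sf α (u t)) := by
      rw [hG_def]
      exact (Finset.add_sum_erase A _ hαsA).symm
    have habs : |∑ α ∈ A.erase αs, c α * (Mf α (u t) * Sf α (u t))| ≤
        ∑ α ∈ A.erase αs, |c α| * (Mf α (u t) * Sf α (u t)) := by
      refine (Finset.abs_sum_le_sum_abs _ _).trans ?_
      refine Finset.sum_le_sum fun α hα => ?_
      rw [abs_mul, abs_of_nonneg (mul_nonneg (Mf_pos hg).le (Sf_nonneg hg))]
    have hM := mul_nonneg (Mf_pos (α := αs) hg).le (Sf_nonneg (α := αs) hg)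
    have h2 := abs_le.mp (habs.trans hs)
    constructor <;> linarith [h2.1, h2.2, hsplit, mul_nonneg hcαs.le hM]
  obtain ⟨is, his⟩ : ∃ i : Fin m, 1 ≤ αs i := by
    by_contra hh
    push_neg at hh
    have h0 : ∀ i, αs i = 0 := fun i => by have := hh i; omega
    simp [h0] at hdeg
  have hSpos : ∀ᶠ t in atTop, 0 < Sf αs (u t) := by
    filter_upwards [hGood] with t hg
    have h1 := le_Sf hg his
    have h2 : 0 < 1 / Rf (u t) ((is:ℕ)+1) := by
      have := Rf_pos hg (K := m+2) (k := (is:ℕ)+1) (by have := is.isLt; omega)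
      positivity
    linarith
  have hd'eq : Q₁.derivative.natDegree = d - 1 := by
    refine le_antisymm (Polynomial.natDegree_derivative_le Q₁) ?_
    refine Polynomial.le_natDegree_of_ne_zero ?_
    rw [Polynomial.coeff_derivative, show d - 1 + 1 = d by omega]
    have h1 : Q₁.coeff d = Q₁.leadingCoeff := rfl
    rw [h1]
    have h2 : (0:ℝ) < (d - 1 : ℕ) + 1 := by positivity
    positivity
  have hlc' : 0 < Q₁.derivative.leadingCoeff := by
    rw [Polynomial.leadingCoeff, hd'eq, Polynomial.coeff_derivative,
      show d - 1 + 1 = d by omega]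
    have h1 : Q₁.coeff d = Q₁.leadingCoeff := rfl
    rw [h1]
    positivity
  set Cq : ℝ := 4 * β * Q₁.derivative.leadingCoeff / Q₁.leadingCoeff with hCq_def
  have hCqpos : 0 < Cq := by positivity
  have hvu : ∀ᶠ t in atTop, 0 < u t ∧ 0 < v t ∧ v t / u t ≤ Cq * t⁻¹ := by
    filter_upwards [(tendsto_rpow_atTop hβ).eventually (poly_bounds hlc),
      (tendsto_rpow_atTop hβ).eventually (poly_bounds hlc'),
      (tendsto_rpow_atTop hβ).eventually_ge_atTop 1,
      eventually_gt_atTop (0:ℝ)] with t hb1 hb2 hx1 ht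
    have hx0 : (0:ℝ) < t ^ β := lt_of_lt_of_le one_pos hx1
    have hu0 : 0 < u t := lt_of_lt_of_le (by positivity) hb1.1
    have hv0 : 0 < v t := by
      have h1 : 0 < Q₁.derivative.eval (t ^ β) :=
        lt_of_lt_of_le (by positivity) hb2.1
      have h2 : 0 < β * t ^ (β-1) := by
        have := Real.rpow_pos_of_pos ht (β-1)
        positivity
      exact mul_pos h1 h2
    refine ⟨hu0, hv0, ?_⟩
    rw [show Cq * t⁻¹ = Cq / t from (div_eq_mul_inv Cq t).symm,
      div_le_div_iff₀ hu0 ht]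
    have ht1 : t ^ (β-1) * t = t ^ β := by
      have := Real.rpow_add_one ht.ne' (β-1)
      rw [show β - 1 + 1 = β by ring] at this
      rw [this]
    have hkey : v t * t = β * (Q₁.derivative.eval (t^β) * (t^β)) := by
      calc v t * t = β * (Q₁.derivative.eval (t^β) * (t^(β-1) * t)) := by
            rw [hv_def]; ring
        _ = β * (Q₁.derivative.eval (t^β) * t^β) := by rw [ht1]
    rw [hkey]
    rw [hd'eq] at hb2
    have hs2 : (t^β)^(d-1) * (t^β) = (t^β)^d := by
      rw [← pow_succ, show d - 1 + 1 = d by omega]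
    have hs1 : Q₁.derivative.eval (t^β) * (t^β) ≤
        2 * Q₁.derivative.leadingCoeff * (t^β)^d := by
      calc Q₁.derivative.eval (t^β) * (t^β)
          ≤ (2 * Q₁.derivative.leadingCoeff * (t^β)^(d-1)) * (t^β) :=
            mul_le_mul_of_nonneg_right hb2.2 hx0.le
        _ = 2 * Q₁.derivative.leadingCoeff * ((t^β)^(d-1) * (t^β)) := by ring
        _ = 2 * Q₁.derivative.leadingCoeff * (t^β)^d := by rw [hs2]
    have hs3 : Q₁.leadingCoeff * (t^β)^d ≤ 2 * u t := by linarith [hb1.1]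
    have hCq4 : Cq * Q₁.leadingCoeff = 4 * β * Q₁.derivative.leadingCoeff := by
      rw [hCq_def]; field_simp
    nlinarith [mul_le_mul_of_nonneg_left hs1 hβ.le,
      mul_le_mul_of_nonneg_left hs3 (by positivity : (0:ℝ) ≤ 2 * β * Q₁.derivative.leadingCoeff),
      mul_pos hx0 hu0]
  set C₄ : ℝ := |Real.log (2*Q₁.leadingCoeff)| + d*β + 1 with hC4_def
  have hC4pos : 0 < C₄ := by positivity
  have hℓ1 : ∀ᶠ t in atTop, iterLog 1 (u t) ≤ C₄ * Real.log t := by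
    filter_upwards [(tendsto_rpow_atTop hβ).eventually (poly_bounds hlc),
      eventually_gt_atTop (0:ℝ), Real.tendsto_log_atTop.eventually_ge_atTop 1,
      hGood] with t hb ht hlt hg
    have hx0 : (0:ℝ) < t ^ β := Real.rpow_pos_of_pos ht β
    have hu0 : 0 < u t := hg.pos (j := 0) (by omega)
    have h2 : Real.log (u t) ≤ Real.log (2*Q₁.leadingCoeff * (t^β)^d) :=
      (Real.log_le_log_iff hu0 (by positivity)).mpr hb.2
    have h3 : Real.log (2*Q₁.leadingCoeff * (t^β)^d) =
        Real.log (2*Q₁.leadingCoeff) + d * (β * Real.log t) := by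
      rw [Real.log_mul (by positivity) (by positivity), Real.log_pow,
        Real.log_rpow ht]
    have h4 := le_abs_self (Real.log (2*Q₁.leadingCoeff))
    have h5 : (0:ℝ) ≤ (d:ℝ) * β := by positivity
    have : iterLog 1 (u t) = Real.log (u t) := rfl
    rw [this, hC4_def]
    nlinarith [mul_nonneg (abs_nonneg (Real.log (2*Q₁.leadingCoeff)))
      (sub_nonneg.mpr hlt)]
  have hωμ : ∀ μ : ℝ, 0 < μ → ∀ᶠ t in atTop, ω t ^ μ ≤ t := by
    intro μ hμ
    set q : ℝ := ((∑ i, αs i : ℕ) : ℝ) * μ with hq_def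
    have hlit : Tendsto (fun t:ℝ =>
        (2*c αs)^μ * C₄^q * (Real.log t ^ q / t)) atTop (nhds 0) := by
      have h1 : (fun x:ℝ => Real.log x ^ q) =o[atTop] fun x:ℝ => x ^ (1:ℝ) :=
        isLittleO_log_rpow_rpow_atTop _ one_pos
      simp only [Real.rpow_one] at h1
      have h2 := h1.tendsto_div_nhds_zero
      have h3 := h2.const_mul ((2*c αs)^μ * C₄^q)
      simpa using h3
    have hsmall : ∀ᶠ t in atTop,
        (2*c αs)^μ * C₄^q * (Real.log t ^ q / t) ≤ 1 :=
      (hlit.eventually_lt_const zero_lt_one).mono fun t h => h.le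
    filter_upwards [hGood, hωb, hℓ1, hsmall, eventually_gt_atTop (0:ℝ),
      Real.tendsto_log_atTop.eventually_ge_atTop 1] with t hg hb hl1 hsm ht hlt
    have hMpos := Mf_pos (α := αs) hg
    have hωpos : 0 < ω t := lt_of_lt_of_le (by positivity) hb.1
    have hlog0 : (0:ℝ) ≤ Real.log t := by linarith
    have hℓ1nn : (0:ℝ) ≤ iterLog 1 (u t) := (hg.pos (j := 1) (by omega)).le
    have hM : Mf αs (u t) ≤ (C₄ * Real.log t) ^ (∑ i, αs i) := by
      calc Mf αs (u t) ≤ iterLog 1 (u t) ^ (∑ i, αs i) := Mf_le hg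
        _ ≤ (C₄ * Real.log t) ^ (∑ i, αs i) := pow_le_pow_left₀ hℓ1nn hl1 _
    have hω2 : ω t ≤ 2*c αs * (C₄ * Real.log t)^(∑ i, αs i) := by
      refine hb.2.trans ?_
      exact mul_le_mul_of_nonneg_left hM (by positivity)
    have hω3 : ω t ^ μ ≤ (2*c αs * (C₄ * Real.log t)^(∑ i, αs i)) ^ μ :=
      Real.rpow_le_rpow hωpos.le hω2 hμ.le
    have hCL : (0:ℝ) ≤ C₄ * Real.log t := by positivity
    have heq : (2*c αs * (C₄ * Real.log t)^(∑ i, αs i)) ^ μ =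
        (2*c αs)^μ * C₄^q * Real.log t ^ q := by
      rw [Real.mul_rpow (by positivity) (by positivity),
        ← Real.rpow_natCast (C₄ * Real.log t) (∑ i, αs i),
        ← Real.rpow_mul hCL, ← hq_def, Real.mul_rpow hC4pos.le hlog0, mul_assoc]
    have hfin : (2*c αs)^μ * C₄^q * Real.log t ^ q ≤ t := by
      have hrw : (2*c αs)^μ * C₄^q * Real.log t ^ q =
          ((2*c αs)^μ * C₄^q * (Real.log t ^ q / t)) * t := by
        field_simp
      rw [hrw]
      calc ((2*c αs)^μ * C₄^q * (Real.log t ^ q / t)) * t ≤ 1 * t :=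
            mul_le_mul_of_nonneg_right hsm ht.le
        _ = t := one_mul t
    calc ω t ^ μ ≤ (2*c αs * (C₄ * Real.log t)^(∑ i, αs i)) ^ μ := hω3
      _ = (2*c αs)^μ * C₄^q * Real.log t ^ q := heq
      _ ≤ t := hfin
  have hmaster : ∀ᶠ t in atTop, GoodAt (m+2) (u t) ∧ HasDerivAt u (v t) t ∧
      (0 < u t ∧ 0 < v t ∧ v t / u t ≤ Cq * t⁻¹) ∧
      (c αs/2 * Mf αs (u t) ≤ ω t ∧ ω t ≤ 2*c αs*Mf αs (u t)) ∧
      (c αs/2*(Mf αs (u t)*Sf αs (u t)) ≤ G t ∧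
        G t ≤ 2*c αs*(Mf αs (u t)*Sf αs (u t))) ∧
      0 < Sf αs (u t) := by
    filter_upwards [hGood, hDu, hvu, hωb, hGb, hSpos] with t h1 h2 h3 h4 h5 h6
    exact ⟨h1, h2, h3, h4, h5, h6⟩
  obtain ⟨T₀, hT₀⟩ := eventually_atTop.mp hmaster
  set T := max T₀ 1 with hT_def
  have hT1 : (1:ℝ) ≤ T := le_max_right _ _
  have hTpos : (0:ℝ) < T := lt_of_lt_of_le one_pos hT1
  have hpt : ∀ t, T ≤ t → 0 < ω t ∧ HasDerivAt ω (v t / u t * G t) t ∧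
      0 < v t / u t * G t ∧ 0 < t := by
    intro t ht
    obtain ⟨h1, h2, h3, h4, h5, h6⟩ := hT₀ t (le_trans (le_max_left _ _) ht)
    have htpos : 0 < t := lt_of_lt_of_le hTpos ht
    have hMpos := Mf_pos (α := αs) h1
    have hωpos : 0 < ω t :=
      lt_of_lt_of_le (mul_pos (by linarith) hMpos) h4.1
    have hGpos : 0 < G t :=
      lt_of_lt_of_le (mul_pos (by linarith) (mul_pos hMpos h6)) h5.1
    have hvupos : 0 < v t / u t := div_pos h3.2.1 h3.1
    exact ⟨hωpos, hωd t h1 h2, mul_pos hvupos hGpos, htpos⟩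
  constructor
  · refine ⟨T, hTpos, fun t ht => (hpt t ht).1, ?_, ?_⟩
    · intro t ht
      obtain ⟨hω0, hder, hpos, _⟩ := hpt t ht
      exact ⟨hder.differentiableAt, by rw [hder.deriv]; exact hpos⟩
    · intro lam hlam
      refine ⟨fun t ht => Real.rpow_pos_of_pos (hpt t ht).1 _, ?_⟩
      refine strictAntiOn_of_deriv_neg (convex_Ici T) ?_ ?_
      · intro t ht
        exact (((hpt t ht).2.1.rpow_const (Or.inl (hpt t ht).1.ne')).differentiableAt).continuousAt.continuousWithinAt
      · intro t ht
        rw [interior_Ici] at ht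
        obtain ⟨hω0, hder, hpos, htpos⟩ := hpt t (le_of_lt ht)
        have hd2 := hder.rpow_const (p := -lam) (Or.inl hω0.ne')
        rw [hd2.deriv]
        have h1 : 0 < ω t ^ (-lam - 1) := Real.rpow_pos_of_pos hω0 _
        nlinarith [mul_pos (mul_pos hpos hlam) h1]
  · intro lam hlam
    have hNs1 : (1:ℝ) ≤ ∑ i, (αs i:ℝ) := by
      have h1 : ((∑ i, αs i : ℕ) : ℝ) = ∑ i, (αs i : ℝ) := by push_cast; rfl
      rw [← h1]
      exact_mod_cast hdeg
    have hw2pos : (0:ℝ) < (c αs/2)^(-lam-1) :=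
      Real.rpow_pos_of_pos (by linarith) _
    have hCpos : 0 < lam * (2*c αs) * (∑ i, (αs i:ℝ)) * (c αs/2)^(-lam-1) * Cq :=
      mul_pos (mul_pos (mul_pos (mul_pos hlam (by linarith)) (by linarith)) hw2pos) hCqpos
    have hbound : ∀ t, T ≤ t → |deriv (fun s : ℝ => ω s ^ (-lam)) t| ≤
        lam * (2*c αs) * (∑ i, (αs i:ℝ)) * (c αs/2)^(-lam-1) * Cq * t⁻¹ := by
      intro t ht
      obtain ⟨h1, h2, h3, h4, h5, h6⟩ := hT₀ t (le_trans (le_max_left _ _) ht)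
      obtain ⟨hω0, hder, hmulpos, htpos⟩ := hpt t ht
      have hMpos := Mf_pos (α := αs) h1
      have hM1 := one_le_Mf (α := αs) h1
      have hd2 := hder.rpow_const (p := -lam) (Or.inl hω0.ne')
      rw [hd2.deriv]
      have hw : 0 < ω t ^ (-lam-1) := Real.rpow_pos_of_pos hω0 _
      have hz : 0 < Mf αs (u t) ^ (-lam-1) := Real.rpow_pos_of_pos hMpos _
      have hvu0 : 0 < v t / u t := div_pos h3.2.1 h3.1
      have habs : |v t / u t * G t * -lam * ω t ^ (-lam-1)| =
          lam * (v t/u t * G t) * ω t ^ (-lam-1) := by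
        rw [abs_of_nonpos (by nlinarith [mul_pos hmulpos hw])]
        ring
      rw [habs]
      have hSle : Sf αs (u t) ≤ ∑ i, (αs i:ℝ) := Sf_le h1
      have e1 : ω t ^ (-lam-1) ≤ (c αs/2)^(-lam-1) * Mf αs (u t)^(-lam-1) := by
        have h7 : 0 < c αs/2 * Mf αs (u t) := mul_pos (by linarith) hMpos
        have h8 := Real.rpow_le_rpow_of_nonpos h7 h4.1 (by linarith : -lam-1 ≤ 0)
        rwa [Real.mul_rpow (by linarith : (0:ℝ) ≤ c αs/2) hMpos.le] at h8
      have e2 : Mf αs (u t) * Mf αs (u t) ^ (-lam-1) ≤ 1 := by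
        rw [mul_comm, ← Real.rpow_add_one hMpos.ne' (-lam-1),
          show -lam-1+1 = -lam by ring]
        exact Real.rpow_le_one_of_one_le_of_nonpos hM1 (by linarith)
      have hGle : G t ≤ 2*c αs*(Mf αs (u t) * (∑ i, (αs i:ℝ))) := by
        refine h5.2.trans ?_
        refine mul_le_mul_of_nonneg_left ?_ (by linarith)
        exact mul_le_mul_of_nonneg_left hSle hMpos.le
      have hXnn : (0:ℝ) ≤ lam * (2*c αs) * (∑ i, (αs i:ℝ)) * (c αs/2)^(-lam-1) :=
        le_of_lt (mul_pos (mul_pos (mul_pos hlam (by linarith)) (by linarith)) hw2pos)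
      calc lam * (v t/u t * G t) * ω t ^ (-lam-1)
          ≤ lam * (v t/u t * (2*c αs*(Mf αs (u t) * (∑ i, (αs i:ℝ))))) *
              ω t ^ (-lam-1) := by
            refine mul_le_mul_of_nonneg_right ?_ hw.le
            refine mul_le_mul_of_nonneg_left ?_ hlam.le
            exact mul_le_mul_of_nonneg_left hGle hvu0.le
        _ ≤ lam * (v t/u t * (2*c αs*(Mf αs (u t) * (∑ i, (αs i:ℝ))))) *
              ((c αs/2)^(-lam-1) * Mf αs (u t)^(-lam-1)) := by
            refine mul_le_mul_of_nonneg_left e1 ?_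
            have : (0:ℝ) ≤ v t/u t * (2*c αs*(Mf αs (u t) * (∑ i, (αs i:ℝ)))) :=
              mul_nonneg hvu0.le (mul_nonneg (by linarith)
                (mul_nonneg hMpos.le (by linarith)))
            exact mul_nonneg hlam.le this
        _ = (lam * (2*c αs) * (∑ i, (αs i:ℝ)) * (c αs/2)^(-lam-1)) * (v t/u t) *
              (Mf αs (u t) * Mf αs (u t)^(-lam-1)) := by ring
        _ ≤ (lam * (2*c αs) * (∑ i, (αs i:ℝ)) * (c αs/2)^(-lam-1)) * (Cq * t⁻¹) * 1 := by
            refine mul_le_mul ?_ e2 (mul_nonneg hMpos.le hz.le) ?_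
            · exact mul_le_mul_of_nonneg_left h3.2.2 hXnn
            · exact mul_nonneg hXnn (by positivity)
        _ = lam * (2*c αs) * (∑ i, (αs i:ℝ)) * (c αs/2)^(-lam-1) * Cq * t⁻¹ := by
            ring
    constructor
    · exact ⟨_, hCpos, T, hbound⟩
    · intro μ hμ
      obtain ⟨T₁, hT₁⟩ := eventually_atTop.mp (hωμ μ hμ)
      refine ⟨_, hCpos, max T T₁, fun t ht => ?_⟩
      have h1 := hbound t (le_trans (le_max_left _ _) ht)
      have h2 := hT₁ t (le_trans (le_max_right _ _) ht)
      obtain ⟨hω0, -, -, htpos⟩ := hpt t (le_trans (le_max_left _ _) ht)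
      refine h1.trans ?_
      refine mul_le_mul_of_nonneg_left ?_ hCpos.le
      rw [Real.rpow_neg hω0.le]
      exact inv_anti₀ (Real.rpow_pos_of_pos hω0 μ) h2
end

section
/- Let T* ≥ 0 and let φ : [T*,∞) → (0,∞) satisfy φ(t) → 0 as t → ∞. Let (λₙ)ₙ≥₁ be a strictly increasing sequence of positive numbers diverging to ∞, and suppose there exists M > 1 such that Σ_{n=1}^∞ M^{−λₙ} < ∞. Let (X,‖·‖) be a Banach space and (ξₙ)ₙ≥₁ ⊂ X with ‖ξₙ‖ ≤ c₀ κ^{λₙ} for all n, for some constants c₀, κ > 0. Then there exists T₀ ≥ T* such that the series Σ_{n=1}^∞ ξₙ φ(t)^{λₙ} converges absolutely and uniformly on [T₀,∞); moreover, denoting its sum by g(t), for every N ∈ ℕ there exist C_N > 0 and T_N ≥ T₀ such that ‖g(t) − Σ_{n=1}^N ξₙ φ(t)^{λₙ}‖ ≤ C_N φ(t)^{λ_{N+1}} for all t ≥ T_N. -/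
open Filter

theorem stmt11 {X : Type*} [NormedAddCommGroup X] [NormedSpace ℝ X] [CompleteSpace X]
    (Tstar : ℝ) (hTstar : 0 ≤ Tstar) (φ : ℝ → ℝ)
    (hφpos : ∀ t ≥ Tstar, 0 < φ t)
    (hφ0 : Tendsto φ atTop (nhds 0))
    (lam : ℕ → ℝ) (hlampos : ∀ n, 0 < lam n) (hlammono : StrictMono lam)
    (hlamdiv : Tendsto lam atTop atTop)
    (M : ℝ) (hM : 1 < M) (hMsum : Summable (fun n : ℕ => M ^ (-lam n)))
    (ξ : ℕ → X) (c₀ κ : ℝ) (hc₀ : 0 < c₀) (hκ : 0 < κ)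
    (hξ : ∀ n : ℕ, ‖ξ n‖ ≤ c₀ * κ ^ lam n) :
    ∃ T₀ ≥ Tstar,
      (∀ t ≥ T₀, Summable (fun n : ℕ => ‖ξ n‖ * φ t ^ lam n)) ∧
      TendstoUniformlyOn
        (fun (N : ℕ) (t : ℝ) => ∑ n ∈ Finset.range N, φ t ^ lam n • ξ n)
        (fun t : ℝ => ∑' n : ℕ, φ t ^ lam n • ξ n) atTop (Set.Ici T₀) ∧
      ∀ N : ℕ, ∃ C > (0:ℝ), ∃ T ≥ T₀, ∀ t ≥ T,
        ‖(∑' n : ℕ, φ t ^ lam n • ξ n) - ∑ n ∈ Finset.range N, φ t ^ lam n • ξ n‖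
          ≤ C * φ t ^ lam N := by
  have hM0 : (0:ℝ) < M := lt_trans one_pos hM
  have hκM : (0:ℝ) < (κ * M)⁻¹ := by positivity
  obtain ⟨T₁, hT₁⟩ := eventually_atTop.mp (hφ0.eventually (eventually_le_nhds hκM))
  set T₀ := max Tstar T₁ with hT₀def
  have hT₀Tstar : Tstar ≤ T₀ := le_max_left _ _
  have hkey : ∀ t ≥ T₀, 0 < φ t ∧ κ * φ t ≤ M⁻¹ := by
    intro t ht
    have h1 : 0 < φ t := hφpos t (le_trans hT₀Tstar ht)
    have h2 : φ t ≤ (κ * M)⁻¹ := hT₁ t (le_trans (le_max_right _ _) ht)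
    refine ⟨h1, ?_⟩
    have : κ * (κ * M)⁻¹ = M⁻¹ := by field_simp
    nlinarith
  have hbound : ∀ t ≥ T₀, ∀ n, ‖φ t ^ lam n • ξ n‖ ≤ c₀ * M ^ (-lam n) := by
    intro t ht n
    obtain ⟨h1, h2⟩ := hkey t ht
    have hφn : (0:ℝ) ≤ φ t ^ lam n := Real.rpow_nonneg h1.le _
    rw [norm_smul, Real.norm_eq_abs, abs_of_nonneg hφn]
    calc φ t ^ lam n * ‖ξ n‖ ≤ φ t ^ lam n * (c₀ * κ ^ lam n) :=
          mul_le_mul_of_nonneg_left (hξ n) hφn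
      _ = c₀ * (κ * φ t) ^ lam n := by
          rw [Real.mul_rpow hκ.le h1.le]; ring
      _ ≤ c₀ * (M⁻¹) ^ lam n := by
          have := Real.rpow_le_rpow (by positivity) h2 (hlampos n).le
          exact mul_le_mul_of_nonneg_left this hc₀.le
      _ = c₀ * M ^ (-lam n) := by
          rw [Real.rpow_neg hM0.le, Real.inv_rpow hM0.le]
  refine ⟨T₀, hT₀Tstar, ?_, ?_, ?_⟩
  · intro t ht
    refine Summable.of_nonneg_of_le (fun n => ?_) (fun n => ?_) (hMsum.mul_left c₀)
    · have := (hkey t ht).1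
      positivity
    · calc ‖ξ n‖ * φ t ^ lam n = ‖φ t ^ lam n • ξ n‖ := by
            rw [norm_smul, Real.norm_eq_abs,
              abs_of_nonneg (Real.rpow_nonneg (hkey t ht).1.le _), mul_comm]
        _ ≤ c₀ * M ^ (-lam n) := hbound t ht n
  · exact tendstoUniformlyOn_tsum_nat (hMsum.mul_left c₀) (fun n t ht => hbound t ht n)
  · intro N
    set S := ∑' n : ℕ, M ^ (-lam n) with hSdef
    have hS0 : 0 ≤ S := tsum_nonneg fun n => by positivity
    have hC0 : 0 ≤ c₀ * κ ^ lam N * M ^ lam N * S := by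
      have : (0:ℝ) ≤ c₀ * κ ^ lam N * M ^ lam N := by positivity
      exact mul_nonneg this hS0
    refine ⟨c₀ * κ ^ lam N * M ^ lam N * S + 1, by linarith, T₀, le_refl _, ?_⟩
    intro t ht
    obtain ⟨h1, h2⟩ := hkey t ht
    have hfsum : Summable (fun n : ℕ => φ t ^ lam n • ξ n) :=
      Summable.of_norm (Summable.of_nonneg_of_le (fun n => norm_nonneg _)
        (fun n => hbound t ht n) (hMsum.mul_left c₀))
    have htail : (∑' n : ℕ, φ t ^ lam n • ξ n) - ∑ n ∈ Finset.range N, φ t ^ lam n • ξ n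
        = ∑' i : ℕ, φ t ^ lam (i + N) • ξ (i + N) := by
      have h := Summable.sum_add_tsum_nat_add N hfsum
      rw [← h]; abel
    rw [htail]
    have hκφ : 0 < κ * φ t := by positivity
    -- per-term bound
    have hterm : ∀ i : ℕ, ‖φ t ^ lam (i + N) • ξ (i + N)‖
        ≤ c₀ * κ ^ lam N * M ^ lam N * φ t ^ lam N * M ^ (-lam (i + N)) := by
      intro i
      have hle : lam N ≤ lam (i + N) := hlammono.monotone (Nat.le_add_left N i)
      have hφm : (0:ℝ) ≤ φ t ^ lam (i + N) := Real.rpow_nonneg h1.le _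
      have step1 : ‖φ t ^ lam (i + N) • ξ (i + N)‖ ≤ c₀ * (κ * φ t) ^ lam (i + N) := by
        rw [norm_smul, Real.norm_eq_abs, abs_of_nonneg hφm]
        calc φ t ^ lam (i + N) * ‖ξ (i + N)‖
            ≤ φ t ^ lam (i + N) * (c₀ * κ ^ lam (i + N)) :=
              mul_le_mul_of_nonneg_left (hξ _) hφm
          _ = c₀ * (κ * φ t) ^ lam (i + N) := by
              rw [Real.mul_rpow hκ.le h1.le]; ring
      have split : (κ * φ t) ^ lam (i + N)
          = (κ * φ t) ^ lam N * (κ * φ t) ^ (lam (i + N) - lam N) := by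
        rw [← Real.rpow_add hκφ]; ring_nf
      have hfac1 : (κ * φ t) ^ lam N = κ ^ lam N * φ t ^ lam N :=
        Real.mul_rpow hκ.le h1.le
      have hfac2 : (κ * φ t) ^ (lam (i + N) - lam N)
          ≤ M ^ lam N * M ^ (-lam (i + N)) := by
        calc (κ * φ t) ^ (lam (i + N) - lam N)
            ≤ (M⁻¹) ^ (lam (i + N) - lam N) :=
              Real.rpow_le_rpow hκφ.le h2 (by linarith)
          _ = M ^ (lam N - lam (i + N)) := by
              rw [Real.inv_rpow hM0.le, ← Real.rpow_neg hM0.le]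
              congr 1; ring
          _ = M ^ lam N * M ^ (-lam (i + N)) := by
              rw [← Real.rpow_add hM0]; ring_nf
      calc ‖φ t ^ lam (i + N) • ξ (i + N)‖
          ≤ c₀ * (κ * φ t) ^ lam (i + N) := step1
        _ = c₀ * ((κ ^ lam N * φ t ^ lam N) * (κ * φ t) ^ (lam (i + N) - lam N)) := by
            rw [split, hfac1]
        _ ≤ c₀ * ((κ ^ lam N * φ t ^ lam N) * (M ^ lam N * M ^ (-lam (i + N)))) := by
            have hnn : (0:ℝ) ≤ κ ^ lam N * φ t ^ lam N := by positivity
            exact mul_le_mul_of_nonneg_left (mul_le_mul_of_nonneg_left hfac2 hnn) hc₀.le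
        _ = c₀ * κ ^ lam N * M ^ lam N * φ t ^ lam N * M ^ (-lam (i + N)) := by ring
    -- sum the bounds
    have hbsum : Summable (fun i : ℕ =>
        c₀ * κ ^ lam N * M ^ lam N * φ t ^ lam N * M ^ (-lam (i + N))) :=
      (((summable_nat_add_iff N).mpr hMsum).mul_left _)
    have hnormsum : Summable (fun i : ℕ => ‖φ t ^ lam (i + N) • ξ (i + N)‖) :=
      Summable.of_nonneg_of_le (fun i => norm_nonneg _) hterm hbsum
    have hTtail : (∑' i : ℕ, M ^ (-lam (i + N))) ≤ S := by
      have h := Summable.sum_add_tsum_nat_add N hMsum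
      have hp : (0:ℝ) ≤ ∑ i ∈ Finset.range N, M ^ (-lam i) :=
        Finset.sum_nonneg fun i _ => by positivity
      rw [hSdef]; linarith
    calc ‖∑' i : ℕ, φ t ^ lam (i + N) • ξ (i + N)‖
        ≤ ∑' i : ℕ, ‖φ t ^ lam (i + N) • ξ (i + N)‖ := norm_tsum_le_tsum_norm hnormsum
      _ ≤ ∑' i : ℕ, c₀ * κ ^ lam N * M ^ lam N * φ t ^ lam N * M ^ (-lam (i + N)) :=
          Summable.tsum_le_tsum hterm hnormsum hbsum
      _ = c₀ * κ ^ lam N * M ^ lam N * φ t ^ lam N * ∑' i : ℕ, M ^ (-lam (i + N)) := by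
          rw [tsum_mul_left]
      _ ≤ c₀ * κ ^ lam N * M ^ lam N * φ t ^ lam N * S := by
          have hnn : (0:ℝ) ≤ c₀ * κ ^ lam N * M ^ lam N * φ t ^ lam N := by positivity
          exact mul_le_mul_of_nonneg_left hTtail hnn
      _ ≤ (c₀ * κ ^ lam N * M ^ lam N * S + 1) * φ t ^ lam N := by
          have hφN : (0:ℝ) ≤ φ t ^ lam N := Real.rpow_nonneg h1.le _
          nlinarith
end

section
/- Let T* ≥ 0, let φ and ψₙ (n ∈ ℕ) be positive functions on [T*,∞) tending to 0 as t → ∞, and suppose for each n there exists Dₙ ≥ 1 such that Dₙ^{−1} φ(t)^{λₙ} ≤ ψₙ(t) ≤ Dₙ φ(t)^{λₙ} for all t ≥ T*, where (λₙ) is a sequence of positive numbers with λₙ → ∞. Assume there exists M > 0 with Σ_{n=1}^∞ Dₙ M^{−λₙ} < ∞. Let (X,‖·‖) be a Banach space and (ξₙ) ⊂ X with ‖ξₙ‖ ≤ c₀ κ^{λₙ} for all n, for some constants c₀, κ > 0. Then there exists T₀ ≥ T* such that the series Σ_{n=1}^∞ ξₙ ψₙ(t) converges absolutely and uniformly on [T₀,∞).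 -/
open Filter

theorem stmt12 {X : Type*} [NormedAddCommGroup X] [NormedSpace ℝ X] [CompleteSpace X]
    (Tstar : ℝ) (hTstar : 0 ≤ Tstar)
    (φ : ℝ → ℝ) (ψ : ℕ → ℝ → ℝ)
    (hφpos : ∀ t ≥ Tstar, 0 < φ t) (hφ0 : Tendsto φ atTop (nhds 0))
    (hψpos : ∀ n : ℕ, ∀ t ≥ Tstar, 0 < ψ n t)
    (hψ0 : ∀ n : ℕ, Tendsto (ψ n) atTop (nhds 0))
    (lam : ℕ → ℝ) (hlampos : ∀ n, 0 < lam n)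
    (hlamdiv : Tendsto lam atTop atTop)
    (D : ℕ → ℝ) (hD : ∀ n, 1 ≤ D n)
    (hsand : ∀ n : ℕ, ∀ t ≥ Tstar,
      (D n)⁻¹ * φ t ^ lam n ≤ ψ n t ∧ ψ n t ≤ D n * φ t ^ lam n)
    (M : ℝ) (hM : 0 < M) (hMsum : Summable (fun n : ℕ => D n * M ^ (-lam n)))
    (ξ : ℕ → X) (c₀ κ : ℝ) (hc₀ : 0 < c₀) (hκ : 0 < κ)
    (hξ : ∀ n : ℕ, ‖ξ n‖ ≤ c₀ * κ ^ lam n) :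
    ∃ T₀ ≥ Tstar,
      (∀ t ≥ T₀, Summable (fun n : ℕ => ‖ξ n‖ * ψ n t)) ∧
      TendstoUniformlyOn
        (fun (N : ℕ) (t : ℝ) => ∑ n ∈ Finset.range N, ψ n t • ξ n)
        (fun t : ℝ => ∑' n : ℕ, ψ n t • ξ n) atTop (Set.Ici T₀) := by
  -- choose T₀ with φ t ≤ (κ*M)⁻¹ for t ≥ T₀
  have hε : (0:ℝ) < (κ * M)⁻¹ := by positivity
  have hev : ∀ᶠ t in atTop, φ t < (κ * M)⁻¹ := by
    have := hφ0.eventually (eventually_lt_nhds hε)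
    simpa using this
  obtain ⟨T₁, hT₁⟩ := eventually_atTop.mp hev
  set T₀ := max T₁ Tstar with hT₀def
  have hT₀Tstar : Tstar ≤ T₀ := le_max_right _ _
  have key : ∀ t ≥ T₀, ∀ n, ‖ξ n‖ * ψ n t ≤ c₀ * (D n * M ^ (-lam n)) := by
    intro t ht n
    have htT : Tstar ≤ t := le_trans hT₀Tstar ht
    have hφt : φ t ≤ (κ * M)⁻¹ := (hT₁ t (le_trans (le_max_left _ _) ht)).le
    have hφpos' := hφpos t htT
    have h1 : ‖ξ n‖ * ψ n t ≤ (c₀ * κ ^ lam n) * (D n * φ t ^ lam n) :=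
      mul_le_mul (hξ n) ((hsand n t htT).2) (hψpos n t htT).le (by positivity)
    refine h1.trans ?_
    have h2 : κ ^ lam n * φ t ^ lam n ≤ M ^ (-lam n) := by
      rw [← Real.mul_rpow hκ.le hφpos'.le, Real.rpow_neg hM.le,
        ← Real.inv_rpow hM.le]
      apply Real.rpow_le_rpow (by positivity) _ (hlampos n).le
      calc κ * φ t ≤ κ * (κ * M)⁻¹ := mul_le_mul_of_nonneg_left hφt hκ.le
        _ = M⁻¹ := by field_simp
    calc c₀ * κ ^ lam n * (D n * φ t ^ lam n)
        = c₀ * (D n * (κ ^ lam n * φ t ^ lam n)) := by ring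
      _ ≤ c₀ * (D n * M ^ (-lam n)) := by
          have hDn : (0:ℝ) ≤ D n := le_trans zero_le_one (hD n)
          exact mul_le_mul_of_nonneg_left
            (mul_le_mul_of_nonneg_left h2 hDn) hc₀.le
  refine ⟨T₀, hT₀Tstar, ?_, ?_⟩
  · intro t ht
    have htT : Tstar ≤ t := le_trans hT₀Tstar ht
    exact Summable.of_nonneg_of_le
      (fun n => mul_nonneg (norm_nonneg _) (hψpos n t htT).le)
      (fun n => key t ht n) (hMsum.mul_left c₀)
  · apply tendstoUniformlyOn_tsum_nat (hMsum.mul_left c₀)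
    intro n t ht
    have htT : Tstar ≤ t := le_trans hT₀Tstar ht
    rw [norm_smul, Real.norm_eq_abs, abs_of_pos (hψpos n t htT), mul_comm]
    exact key t ht n
end

section
/- Let T* ≥ 0, let φ and ψₙ (n ∈ ℕ) be positive functions on [T*,∞) tending to 0 as t → ∞, with Dₙ ≥ 1 such that Dₙ^{−1} φ(t)^{λₙ} ≤ ψₙ(t) ≤ Dₙ φ(t)^{λₙ} for all t ≥ T*, where (λₙ) are positive with λₙ → ∞ and n ↦ λₙ is injective. Assume Σ_{n=1}^∞ Dₙ M^{−λₙ} < ∞ for some M > 0. Let (X,‖·‖) be a Banach space, (ξₙ) ⊂ X with ‖ξₙ‖ ≤ c₀ κ^{λₙ} for constants c₀, κ > 0, and let f(t) = Σ_{n=1}^∞ ξₙ ψₙ(t) on [T₀,∞) (where T₀ ≥ T* is such that the series converges absolutely there). Let (μₙ)ₙ≥₁ be the strictly increasing enumeration of the set {λₙ : n ∈ ℕ}, and define ψ*ₙ = ψ_k and ξ*ₙ = ξ_k where k is the unique index with μₙ = λ_k. Then for every N ∈ ℕ there exist C > 0 and T ≥ T₀ such that ‖f(t) − Σ_{n=1}^N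 ξ*ₙ ψ*ₙ(t)‖ ≤ C φ(t)^{μ_{N+1}} for all t ≥ T. -/
open Filter

set_option maxHeartbeats 1000000

theorem stmt13 {X : Type*} [NormedAddCommGroup X] [NormedSpace ℝ X] [CompleteSpace X]
    (Tstar : ℝ) (hTstar : 0 ≤ Tstar)
    (φ : ℝ → ℝ) (ψ : ℕ → ℝ → ℝ)
    (hφpos : ∀ t ≥ Tstar, 0 < φ t) (hφ0 : Tendsto φ atTop (nhds 0))
    (hψpos : ∀ n : ℕ, ∀ t ≥ Tstar, 0 < ψ n t)
    (hψ0 : ∀ n : ℕ, Tendsto (ψ n) atTop (nhds 0))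
    (lam : ℕ → ℝ) (hlampos : ∀ n, 0 < lam n)
    (hlamdiv : Tendsto lam atTop atTop)
    (hlaminj : Function.Injective lam)
    (D : ℕ → ℝ) (hD : ∀ n, 1 ≤ D n)
    (hsand : ∀ n : ℕ, ∀ t ≥ Tstar,
      (D n)⁻¹ * φ t ^ lam n ≤ ψ n t ∧ ψ n t ≤ D n * φ t ^ lam n)
    (M : ℝ) (hM : 0 < M) (hMsum : Summable (fun n : ℕ => D n * M ^ (-lam n)))
    (ξ : ℕ → X) (c₀ κ : ℝ) (hc₀ : 0 < c₀) (hκ : 0 < κ)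
    (hξ : ∀ n : ℕ, ‖ξ n‖ ≤ c₀ * κ ^ lam n)
    (e : ℕ → ℕ) (hebij : Function.Bijective e)
    (hemono : StrictMono (fun n => lam (e n)))
    (T₀ : ℝ) (hT₀ : T₀ ≥ Tstar)
    (habs : ∀ t ≥ T₀, Summable (fun n : ℕ => ‖ξ n‖ * ψ n t)) :
    ∀ N : ℕ, ∃ C > (0:ℝ), ∃ T ≥ T₀, ∀ t ≥ T,
      ‖(∑' n : ℕ, ψ n t • ξ n) - ∑ n ∈ Finset.range N, ψ (e n) t • ξ (e n)‖
        ≤ C * φ t ^ lam (e N) := by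
  intro N
  have heinj := hebij.injective
  set μ := lam (e N) with hμdef
  have hμpos : 0 < μ := hlampos _
  set δ := min 1 (M⁻¹ * κ⁻¹) with hδdef
  have hδpos : 0 < δ := lt_min one_pos (by positivity)
  have hδ1 : δ ≤ 1 := min_le_left _ _
  have hκδ : κ * δ ≤ M⁻¹ := by
    have h1 : δ ≤ M⁻¹ * κ⁻¹ := min_le_right _ _
    have h2 : κ * δ ≤ κ * (M⁻¹ * κ⁻¹) := mul_le_mul_of_nonneg_left h1 hκ.le
    have h3 : κ * (M⁻¹ * κ⁻¹) = M⁻¹ := by field_simp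
    linarith
  have hSnonneg : ∀ n, 0 ≤ D n * M ^ (-lam n) := fun n => by
    have := hD n; positivity
  set S := ∑' n, D n * M ^ (-lam n) with hSdef
  have hS0 : 0 ≤ S := tsum_nonneg hSnonneg
  have hδμpos : 0 < δ ^ (-μ) := Real.rpow_pos_of_pos hδpos _
  refine ⟨c₀ * δ ^ (-μ) * S + 1, by positivity, ?_⟩
  obtain ⟨T₁, hT₁⟩ := eventually_atTop.mp (hφ0.eventually_lt_const hδpos)
  refine ⟨max T₀ T₁, le_max_left _ _, ?_⟩
  intro t ht
  have htT₀ : T₀ ≤ t := le_trans (le_max_left _ _) ht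
  have htTs : Tstar ≤ t := le_trans hT₀ htT₀
  have hφt : 0 < φ t := hφpos t htTs
  have hφδ : φ t ≤ δ := (hT₁ t (le_trans (le_max_right _ _) ht)).le
  set g : ℕ → X := fun n => ψ n t • ξ n with hgdef
  have hgnorm : ∀ n, ‖g n‖ = ψ n t * ‖ξ n‖ := fun n => by
    rw [hgdef, norm_smul, Real.norm_of_nonneg (hψpos n t htTs).le]
  have hsum_norm : Summable (fun n => ‖g n‖) :=
    (habs t htT₀).congr fun n => by rw [hgnorm]; ring
  have hsum : Summable g := hsum_norm.of_norm
  have hsum_e : Summable (fun n => g (e n)) := hsum.comp_injective heinj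
  have hsum_e_norm : Summable (fun n => ‖g (e n)‖) := hsum_norm.comp_injective heinj
  have htsum_eq : ∑' n, g n = ∑' n, g (e n) :=
    ((Equiv.ofBijective e hebij).tsum_eq g).symm
  have hsplit : ∑ i ∈ Finset.range N, g (e i) + ∑' i, g (e (i + N)) = ∑' i, g (e i) :=
    Summable.sum_add_tsum_nat_add N hsum_e
  have hrem : (∑' n, g n) - ∑ n ∈ Finset.range N, ψ (e n) t • ξ (e n)
      = ∑' i, g (e (i + N)) := by
    rw [htsum_eq, ← hsplit]
    simp [hgdef]
  -- key termwise bound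
  have key : ∀ k : ℕ, μ ≤ lam k →
      ‖g k‖ ≤ c₀ * δ ^ (-μ) * φ t ^ μ * (D k * M ^ (-lam k)) := by
    intro k hk
    have hlamk : 0 < lam k := hlampos k
    have hDk : 1 ≤ D k := hD k
    have hξk : 0 ≤ ‖ξ k‖ := norm_nonneg _
    have h1 : ‖g k‖ ≤ (D k * φ t ^ lam k) * (c₀ * κ ^ lam k) := by
      rw [hgnorm]
      exact mul_le_mul (hsand k t htTs).2 (hξ k) hξk (by positivity)
    have h2 : φ t ^ lam k = φ t ^ μ * φ t ^ (lam k - μ) := by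
      rw [← Real.rpow_add hφt]; ring_nf
    have h3 : φ t ^ (lam k - μ) ≤ δ ^ (lam k - μ) :=
      Real.rpow_le_rpow hφt.le hφδ (by linarith)
    have h4 : δ ^ (lam k - μ) = δ ^ lam k * δ ^ (-μ) := by
      rw [← Real.rpow_add hδpos]; ring_nf
    have h5 : κ ^ lam k * δ ^ lam k ≤ M ^ (-lam k) := by
      rw [← Real.mul_rpow hκ.le hδpos.le, Real.rpow_neg hM.le,
        ← Real.inv_rpow hM.le]
      exact Real.rpow_le_rpow (by positivity) hκδ hlamk.le
    have hφμ : 0 ≤ φ t ^ μ := by positivity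
    have hkl : 0 ≤ κ ^ lam k := by positivity
    have hdl : 0 ≤ δ ^ lam k := by positivity
    have h6 : φ t ^ lam k ≤ φ t ^ μ * (δ ^ lam k * δ ^ (-μ)) := by
      calc φ t ^ lam k = φ t ^ μ * φ t ^ (lam k - μ) := h2
        _ ≤ φ t ^ μ * δ ^ (lam k - μ) := by gcongr
        _ = φ t ^ μ * (δ ^ lam k * δ ^ (-μ)) := by rw [h4]
    calc ‖g k‖ ≤ (D k * φ t ^ lam k) * (c₀ * κ ^ lam k) := h1
      _ ≤ (D k * (φ t ^ μ * (δ ^ lam k * δ ^ (-μ)))) * (c₀ * κ ^ lam k) := by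
          gcongr
      _ = c₀ * δ ^ (-μ) * φ t ^ μ * (D k * (κ ^ lam k * δ ^ lam k)) := by ring
      _ ≤ c₀ * δ ^ (-μ) * φ t ^ μ * (D k * M ^ (-lam k)) := by
          have : (0:ℝ) ≤ c₀ * δ ^ (-μ) * φ t ^ μ := by positivity
          gcongr
  have hkN : ∀ i : ℕ, μ ≤ lam (e (i + N)) := fun i =>
    hemono.monotone (Nat.le_add_left N i)
  -- summability of the bounding series
  have hMsum_e : Summable (fun n => D (e n) * M ^ (-lam (e n))) :=
    hMsum.comp_injective heinj
  have hMsum_e' : Summable (fun i => D (e (i + N)) * M ^ (-lam (e (i + N)))) :=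
    (summable_nat_add_iff N).mpr hMsum_e
  have hsum_tail_norm : Summable (fun i => ‖g (e (i + N))‖) :=
    (summable_nat_add_iff N).mpr hsum_e_norm
  have hS' : ∑' i, D (e (i + N)) * M ^ (-lam (e (i + N))) ≤ S := by
    have hre : ∑' n, D (e n) * M ^ (-lam (e n)) = S :=
      (Equiv.ofBijective e hebij).tsum_eq (fun n => D n * M ^ (-lam n))
    have hsplit2 := Summable.sum_add_tsum_nat_add (f := fun n => D (e n) * M ^ (-lam (e n))) N hMsum_e
    have hpart : (0:ℝ) ≤ ∑ i ∈ Finset.range N, D (e i) * M ^ (-lam (e i)) :=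
      Finset.sum_nonneg fun i _ => hSnonneg _
    rw [hre] at hsplit2
    linarith [hsplit2, hpart]
  have hbound : ‖∑' i, g (e (i + N))‖ ≤ (c₀ * δ ^ (-μ) * S + 1) * φ t ^ μ := by
    have h1 : ‖∑' i, g (e (i + N))‖ ≤ ∑' i, ‖g (e (i + N))‖ :=
      norm_tsum_le_tsum_norm hsum_tail_norm
    have h2 : ∑' i, ‖g (e (i + N))‖
        ≤ ∑' i, c₀ * δ ^ (-μ) * φ t ^ μ * (D (e (i + N)) * M ^ (-lam (e (i + N)))) :=
      Summable.tsum_le_tsum (fun i => key _ (hkN i)) hsum_tail_norm (hMsum_e'.mul_left _)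
    have h3 : ∑' i, c₀ * δ ^ (-μ) * φ t ^ μ * (D (e (i + N)) * M ^ (-lam (e (i + N))))
        = c₀ * δ ^ (-μ) * φ t ^ μ * ∑' i, D (e (i + N)) * M ^ (-lam (e (i + N))) :=
      tsum_mul_left
    have hφμ : 0 ≤ φ t ^ μ := by positivity
    have h4 : c₀ * δ ^ (-μ) * φ t ^ μ * (∑' i, D (e (i + N)) * M ^ (-lam (e (i + N))))
        ≤ (c₀ * δ ^ (-μ) * S + 1) * φ t ^ μ := by
      calc c₀ * δ ^ (-μ) * φ t ^ μ * (∑' i, D (e (i + N)) * M ^ (-lam (e (i + N))))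
          ≤ c₀ * δ ^ (-μ) * φ t ^ μ * S := by
            have hc : (0:ℝ) ≤ c₀ * δ ^ (-μ) * φ t ^ μ := by positivity
            exact mul_le_mul_of_nonneg_left hS' hc
        _ = (c₀ * δ ^ (-μ) * S) * φ t ^ μ := by ring
        _ ≤ (c₀ * δ ^ (-μ) * S + 1) * φ t ^ μ :=
            mul_le_mul_of_nonneg_right (by linarith) hφμ
    rw [h3] at h2
    linarith [h1, h2, h4]
  calc ‖(∑' n : ℕ, ψ n t • ξ n) - ∑ n ∈ Finset.range N, ψ (e n) t • ξ (e n)‖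
      = ‖∑' i, g (e (i + N))‖ := by rw [← hrem]
    _ ≤ (c₀ * δ ^ (-μ) * S + 1) * φ t ^ μ := hbound
end

section
/- Let T* ≥ 0 and let ζ, ϑ, φ be positive functions on [T*,∞) tending to 0 as t → ∞, and suppose there exist D ≥ 1 and s₁, s₂ > 0 such that D^{−1} φ(t)^{s₁} ≤ ζ(t) ≤ D φ(t)^{s₁} and D^{−1} φ(t)^{s₂} ≤ ϑ(t) ≤ D φ(t)^{s₂} for all t ≥ T*. Let (αₙ) and (βₙ) be sequences of nonnegative numbers with αₙ + βₙ → ∞, set λₙ = s₁αₙ + s₂βₙ, and assume Σ_{n=1}^∞ M^{−λₙ} < ∞ for some M > 1. Let (X,‖·‖) be a Banach space and (ξₙ) ⊂ X with ‖ξₙ‖ ≤ c₀ κ^{λₙ} for constants c₀, κ > 0. Then: (i) there exists T₀ ≥ T* such that Σ_{n=1}^∞ ξₙ ζ(t)^{αₙ} ϑ(t)^{βₙ} converges absolutely and uniformly on [T₀,∞); and (ii) if moreover n ↦ λₙ is injective, then, with (μₙ) the strictly increasing enumeration of {λₙ}, ψ*ₙ(t) = ζ(t)^{α_k} ϑ(t)^{β_k}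 and ξ*ₙ = ξ_k where μₙ = λ_k, and f(t) the sum of the series, for every N ∈ ℕ there exist C > 0 and T ≥ T₀ such that ‖f(t) − Σ_{n=1}^N ξ*ₙ ψ*ₙ(t)‖ ≤ C φ(t)^{μ_{N+1}} for all t ≥ T. -/
open Filter

theorem stmt14 {X : Type*} [NormedAddCommGroup X] [NormedSpace ℝ X] [CompleteSpace X]
    (Tstar : ℝ) (hTstar : 0 ≤ Tstar)
    (ζ ϑ φ : ℝ → ℝ)
    (hζpos : ∀ t ≥ Tstar, 0 < ζ t) (hϑpos : ∀ t ≥ Tstar, 0 < ϑ t)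
    (hφpos : ∀ t ≥ Tstar, 0 < φ t)
    (hζ0 : Tendsto ζ atTop (nhds 0)) (hϑ0 : Tendsto ϑ atTop (nhds 0))
    (hφ0 : Tendsto φ atTop (nhds 0))
    (D : ℝ) (hD : 1 ≤ D) (s₁ s₂ : ℝ) (hs₁ : 0 < s₁) (hs₂ : 0 < s₂)
    (hζsand : ∀ t ≥ Tstar, D⁻¹ * φ t ^ s₁ ≤ ζ t ∧ ζ t ≤ D * φ t ^ s₁)
    (hϑsand : ∀ t ≥ Tstar, D⁻¹ * φ t ^ s₂ ≤ ϑ t ∧ ϑ t ≤ D * φ t ^ s₂)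
    (α β : ℕ → ℝ) (hα : ∀ n, 0 ≤ α n) (hβ : ∀ n, 0 ≤ β n)
    (hαβ : Tendsto (fun n => α n + β n) atTop atTop)
    (lam : ℕ → ℝ) (hlam : ∀ n, lam n = s₁ * α n + s₂ * β n)
    (M : ℝ) (hM : 1 < M) (hMsum : Summable (fun n : ℕ => M ^ (-lam n)))
    (ξ : ℕ → X) (c₀ κ : ℝ) (hc₀ : 0 < c₀) (hκ : 0 < κ)
    (hξ : ∀ n : ℕ, ‖ξ n‖ ≤ c₀ * κ ^ lam n) :
    (∃ T₀ ≥ Tstar,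
      (∀ t ≥ T₀, Summable (fun n : ℕ => ‖ξ n‖ * (ζ t ^ α n * ϑ t ^ β n))) ∧
      TendstoUniformlyOn
        (fun (N : ℕ) (t : ℝ) => ∑ n ∈ Finset.range N, (ζ t ^ α n * ϑ t ^ β n) • ξ n)
        (fun t : ℝ => ∑' n : ℕ, (ζ t ^ α n * ϑ t ^ β n) • ξ n) atTop (Set.Ici T₀)) ∧
    (Function.Injective lam →
      ∀ e : ℕ → ℕ, Function.Bijective e → StrictMono (fun n => lam (e n)) →
      ∀ T₀ ≥ Tstar,
        (∀ t ≥ T₀, Summable (fun n : ℕ => ‖ξ n‖ * (ζ t ^ α n * ϑ t ^ β n))) →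
        ∀ N : ℕ, ∃ C > (0:ℝ), ∃ T ≥ T₀, ∀ t ≥ T,
          ‖(∑' n : ℕ, (ζ t ^ α n * ϑ t ^ β n) • ξ n)
              - ∑ n ∈ Finset.range N, (ζ t ^ α (e n) * ϑ t ^ β (e n)) • ξ (e n)‖
            ≤ C * φ t ^ lam (e N)) := by
  have hDpos : (0:ℝ) < D := lt_of_lt_of_le one_pos hD
  have hMpos : (0:ℝ) < M := lt_trans one_pos hM
  obtain ⟨s, hs, hss₁, hss₂⟩ : ∃ s, 0 < s ∧ s ≤ s₁ ∧ s ≤ s₂ :=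
    ⟨min s₁ s₂, lt_min hs₁ hs₂, min_le_left _ _, min_le_right _ _⟩
  set K : ℝ := κ * D ^ s⁻¹ with hKdef
  have hKpos : 0 < K := mul_pos hκ (Real.rpow_pos_of_pos hDpos _)
  have hlamnn : ∀ n, 0 ≤ lam n := fun n => by
    rw [hlam]
    exact add_nonneg (mul_nonneg hs₁.le (hα n)) (mul_nonneg hs₂.le (hβ n))
  -- key pointwise bound
  have key : ∀ t, Tstar ≤ t → ∀ n,
      ζ t ^ α n * ϑ t ^ β n * ‖ξ n‖ ≤ c₀ * (K * φ t) ^ lam n := by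
    intro t ht n
    have hφt : 0 < φ t := hφpos t ht
    have hζt : 0 < ζ t := hζpos t ht
    have hϑt : 0 < ϑ t := hϑpos t ht
    have h1 : ζ t ^ α n ≤ D ^ α n * φ t ^ (s₁ * α n) := by
      calc ζ t ^ α n ≤ (D * φ t ^ s₁) ^ α n :=
            Real.rpow_le_rpow hζt.le (hζsand t ht).2 (hα n)
        _ = D ^ α n * φ t ^ (s₁ * α n) := by
            rw [Real.mul_rpow hDpos.le (Real.rpow_nonneg hφt.le _), ← Real.rpow_mul hφt.le]
    have h2 : ϑ t ^ β n ≤ D ^ β n * φ t ^ (s₂ * β n) := by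
      calc ϑ t ^ β n ≤ (D * φ t ^ s₂) ^ β n :=
            Real.rpow_le_rpow hϑt.le (hϑsand t ht).2 (hβ n)
        _ = D ^ β n * φ t ^ (s₂ * β n) := by
            rw [Real.mul_rpow hDpos.le (Real.rpow_nonneg hφt.le _), ← Real.rpow_mul hφt.le]
    have hD3 : D ^ (α n + β n) ≤ (D ^ s⁻¹) ^ lam n := by
      have hab : α n + β n ≤ s⁻¹ * lam n := by
        rw [hlam]
        have h4 : s * (α n + β n) ≤ s₁ * α n + s₂ * β n := by
          have hh1 := mul_le_mul_of_nonneg_right hss₁ (hα n)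
          have hh2 := mul_le_mul_of_nonneg_right hss₂ (hβ n)
          nlinarith
        calc α n + β n = s⁻¹ * (s * (α n + β n)) := by field_simp
          _ ≤ s⁻¹ * (s₁ * α n + s₂ * β n) :=
              mul_le_mul_of_nonneg_left h4 (inv_nonneg.2 hs.le)
      calc D ^ (α n + β n) ≤ D ^ (s⁻¹ * lam n) :=
            Real.rpow_le_rpow_of_exponent_le hD hab
        _ = (D ^ s⁻¹) ^ lam n := Real.rpow_mul hDpos.le _ _
    calc ζ t ^ α n * ϑ t ^ β n * ‖ξ n‖
        ≤ (D ^ α n * φ t ^ (s₁ * α n)) * (D ^ β n * φ t ^ (s₂ * β n)) * (c₀ * κ ^ lam n) := by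
          have hζnn : 0 ≤ ζ t ^ α n := Real.rpow_nonneg hζt.le _
          have hϑnn : 0 ≤ ϑ t ^ β n := Real.rpow_nonneg hϑt.le _
          have h2' : 0 ≤ D ^ β n * φ t ^ (s₂ * β n) := by positivity
          have hξn : 0 ≤ ‖ξ n‖ := norm_nonneg _
          exact mul_le_mul (mul_le_mul h1 h2 hϑnn (by positivity)) (hξ n) hξn (by positivity)
      _ = D ^ (α n + β n) * (c₀ * (κ ^ lam n * φ t ^ lam n)) := by
          rw [Real.rpow_add hDpos, hlam, Real.rpow_add hφt]; ring
      _ ≤ (D ^ s⁻¹) ^ lam n * (c₀ * (κ ^ lam n * φ t ^ lam n)) := by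
          apply mul_le_mul_of_nonneg_right hD3
          positivity
      _ = c₀ * (K * φ t) ^ lam n := by
          rw [hKdef, Real.mul_rpow (by positivity) hφt.le, Real.mul_rpow hκ.le (by positivity)]
          ring
  -- choose T₁ making K * φ t small
  obtain ⟨T₁, hT₁star, hT₁⟩ : ∃ T₁, Tstar ≤ T₁ ∧ ∀ t, T₁ ≤ t → K * φ t ≤ M⁻¹ := by
    have h1 : ∀ᶠ t in atTop, φ t < M⁻¹ / K :=
      hφ0.eventually (gt_mem_nhds (by positivity))
    obtain ⟨a, ha⟩ := eventually_atTop.mp h1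
    refine ⟨max a Tstar, le_max_right _ _, fun t ht => ?_⟩
    have := ha t (le_trans (le_max_left _ _) ht)
    have := (lt_div_iff₀' hKpos).mp this
    linarith
  have bound : ∀ t, T₁ ≤ t → ∀ n,
      ‖(ζ t ^ α n * ϑ t ^ β n) • ξ n‖ ≤ c₀ * M ^ (-lam n) := by
    intro t ht n
    have hts : Tstar ≤ t := le_trans hT₁star ht
    have hζt := hζpos t hts
    have hϑt := hϑpos t hts
    have hφt := hφpos t hts
    have hψ : 0 ≤ ζ t ^ α n * ϑ t ^ β n := by positivity
    rw [norm_smul, Real.norm_of_nonneg hψ]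
    calc ζ t ^ α n * ϑ t ^ β n * ‖ξ n‖ ≤ c₀ * (K * φ t) ^ lam n := key t hts n
      _ ≤ c₀ * (M⁻¹) ^ lam n :=
          mul_le_mul_of_nonneg_left
            (Real.rpow_le_rpow (by positivity) (hT₁ t ht) (hlamnn n)) hc₀.le
      _ = c₀ * M ^ (-lam n) := by
          rw [Real.inv_rpow hMpos.le, ← Real.rpow_neg hMpos.le]
  have hsummand : ∀ t, T₁ ≤ t →
      Summable (fun n : ℕ => ‖ξ n‖ * (ζ t ^ α n * ϑ t ^ β n)) := by
    intro t ht
    have hts : Tstar ≤ t := le_trans hT₁star ht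
    have hζt := hζpos t hts
    have hϑt := hϑpos t hts
    refine Summable.of_nonneg_of_le (fun n => by positivity) (fun n => ?_) (hMsum.mul_left c₀)
    have h := bound t ht n
    rw [norm_smul, Real.norm_of_nonneg (by positivity)] at h
    rw [mul_comm]
    exact h
  constructor
  · exact ⟨T₁, hT₁star, fun t ht => hsummand t ht,
      tendstoUniformlyOn_tsum_nat (hMsum.mul_left c₀) (fun n t ht => bound t ht n)⟩
  · intro _ e he hmono T₀ hT₀ hsum N
    have hμnn : 0 ≤ lam (e N) := hlamnn _
    set μ := lam (e N) with hμ
    set S := ∑' n : ℕ, M ^ (-lam n) with hSdef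
    have hSpos : 0 < S := Summable.tsum_pos hMsum (fun n => by positivity) 0 (by positivity)
    refine ⟨c₀ * (K * M) ^ μ * S,
      mul_pos (mul_pos hc₀ (Real.rpow_pos_of_pos (mul_pos hKpos hMpos) μ)) hSpos,
      max T₀ T₁, le_max_left _ _, fun t ht => ?_⟩
    have htT₁ : T₁ ≤ t := le_trans (le_max_right _ _) ht
    have htT₀ : T₀ ≤ t := le_trans (le_max_left _ _) ht
    have hts : Tstar ≤ t := le_trans hT₁star htT₁
    have hφt := hφpos t hts
    have hζt := hζpos t hts
    have hϑt := hϑpos t hts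
    set g : ℕ → X := fun n => (ζ t ^ α n * ϑ t ^ β n) • ξ n with hgdef
    have hgnorm : ∀ n, ‖g n‖ = ζ t ^ α n * ϑ t ^ β n * ‖ξ n‖ := fun n => by
      rw [hgdef, norm_smul, Real.norm_of_nonneg (by positivity)]
    have hgnormsum : Summable (fun n => ‖g n‖) := by
      refine (hsum t htT₀).congr fun n => ?_
      rw [hgnorm n, mul_comm]
    have hg : Summable g := hgnormsum.of_norm
    have hge : Summable (g ∘ e) := hg.comp_injective he.injective
    have hinj : Function.Injective fun i : ℕ => e (i + N) := by
      intro a b h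
      have := he.injective h
      omega
    have h2 : ∑' n, g (e n) = ∑' n, g n := (Equiv.ofBijective e he).tsum_eq g
    have hkey : (∑' n : ℕ, (ζ t ^ α n * ϑ t ^ β n) • ξ n)
        - ∑ n ∈ Finset.range N, (ζ t ^ α (e n) * ϑ t ^ β (e n)) • ξ (e n)
        = ∑' i : ℕ, g (e (i + N)) := by
      have h1 := Summable.sum_add_tsum_nat_add (f := g ∘ e) N hge
      simp only [Function.comp] at h1
      show (∑' n : ℕ, g n) - ∑ n ∈ Finset.range N, g (e n) = ∑' i : ℕ, g (e (i + N))
      rw [← h2, ← h1]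
      abel
    have hKφ : 0 < K * φ t := mul_pos hKpos hφt
    have hKφM : K * φ t ≤ M⁻¹ := hT₁ t htT₁
    have hterm : ∀ m : ℕ, μ ≤ lam m →
        ‖g m‖ ≤ (c₀ * (K * M) ^ μ * φ t ^ μ) * M ^ (-lam m) := by
      intro m hm
      calc ‖g m‖ = ζ t ^ α m * ϑ t ^ β m * ‖ξ m‖ := hgnorm m
        _ ≤ c₀ * (K * φ t) ^ lam m := key t hts m
        _ = c₀ * ((K * φ t) ^ μ * (K * φ t) ^ (lam m - μ)) := by
            have hexp : μ + (lam m - μ) = lam m := by ring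
            rw [← hexp, Real.rpow_add hKφ]
            ring_nf
        _ ≤ c₀ * ((K * φ t) ^ μ * (M⁻¹) ^ (lam m - μ)) := by
            have h5 := Real.rpow_le_rpow hKφ.le hKφM (sub_nonneg.mpr hm)
            have h6 : 0 ≤ (K * φ t) ^ μ := (Real.rpow_pos_of_pos hKφ μ).le
            exact mul_le_mul_of_nonneg_left (mul_le_mul_of_nonneg_left h5 h6) hc₀.le
        _ = (c₀ * (K * M) ^ μ * φ t ^ μ) * M ^ (-lam m) := by
            simp only [Real.mul_rpow hKpos.le hMpos.le, Real.mul_rpow hKpos.le hφt.le,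
              Real.inv_rpow hMpos.le, ← Real.rpow_neg hMpos.le]
            rw [show -(lam m - μ) = μ + (-lam m) by ring, Real.rpow_add hMpos]
            ring
    have hmono' : ∀ i : ℕ, μ ≤ lam (e (i + N)) := fun i =>
      hmono.monotone (Nat.le_add_left N i)
    have hsum2 : Summable (fun i : ℕ => M ^ (-lam (e (i + N)))) :=
      hMsum.comp_injective hinj
    rw [hkey]
    calc ‖∑' i : ℕ, g (e (i + N))‖ ≤ ∑' i : ℕ, ‖g (e (i + N))‖ :=
          norm_tsum_le_tsum_norm (hgnormsum.comp_injective hinj)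
      _ ≤ ∑' i : ℕ, (c₀ * (K * M) ^ μ * φ t ^ μ) * M ^ (-lam (e (i + N))) := by
          refine Summable.tsum_le_tsum (fun i => hterm _ (hmono' i))
            (hgnormsum.comp_injective hinj) (hsum2.mul_left _)
      _ = (c₀ * (K * M) ^ μ * φ t ^ μ) * ∑' i : ℕ, M ^ (-lam (e (i + N))) := tsum_mul_left
      _ ≤ (c₀ * (K * M) ^ μ * φ t ^ μ) * S := by
          refine mul_le_mul_of_nonneg_left ?_ (by positivity)
          exact Summable.tsum_le_tsum_of_inj (fun i => e (i + N)) hinj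
            (fun c _ => by positivity) (fun i => le_refl _) hsum2 hMsum
      _ = c₀ * (K * M) ^ μ * S * φ t ^ μ := by ring
end
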